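/- arXiv:2008.06476 — 5 statements merged into one kernel-verified Lean document; each statement's English description precedes it below -/
import Mathlib

section
/- Fix x ∈ ℝⁿ. Assume every node has degree mᵢ ≥ 1 and F has full column rank. Then the function ρ ↦ T(x,ρ) = xᵀK(ρ)x is concave on the open interval (0,1). -/
open Matrix

/-- Degree of node `i`: `mᵢ = ∑ⱼ Wᵢⱼ`. -/
noncomputable def degVec {n : ℕ} (W : Matrix (Fin n) (Fin n) ℝ) (i : Fin n) : ℝ := ∑ j, W i j

/-- `R(ρ) = D - ρ W` where `D = diag(m₁,…,mₙ)`. -/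
noncomputable def Rmat {n : ℕ} (W : Matrix (Fin n) (Fin n) ℝ) (ρ : ℝ) :
    Matrix (Fin n) (Fin n) ℝ :=
  Matrix.diagonal (degVec W) - ρ • W

/-- `K(ρ) = (D-ρW) - (D-ρW)F[Fᵀ(D-ρW)F]⁻¹Fᵀ(D-ρW)`. -/
noncomputable def Kmat {n p : ℕ} (W : Matrix (Fin n) (Fin n) ℝ)
    (F : Matrix (Fin n) (Fin (p + 1)) ℝ) (ρ : ℝ) : Matrix (Fin n) (Fin n) ℝ :=
  Rmat W ρ - Rmat W ρ * F * (Fᵀ * Rmat W ρ * F)⁻¹ * Fᵀ * Rmat W ρ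

/-- `T(x,ρ) = xᵀ K(ρ) x`. -/
noncomputable def Tcrit {n p : ℕ} (W : Matrix (Fin n) (Fin n) ℝ)
    (F : Matrix (Fin n) (Fin (p + 1)) ℝ) (x : Fin n → ℝ) (ρ : ℝ) : ℝ :=
  x ⬝ᵥ (Kmat W F ρ).mulVec x

section Aux

variable {n p : ℕ}

/-- symmetric matrices move through dot products -/
lemma dot_symm_aux {k : ℕ} (A : Matrix (Fin k) (Fin k) ℝ) (hA : Aᵀ = A)
    (u w : Fin k → ℝ) : u ⬝ᵥ (A *ᵥ w) = (A *ᵥ u) ⬝ᵥ w := by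
  rw [dotProduct_mulVec, ← mulVec_transpose, hA]

lemma dot_transpose_aux {k l : ℕ} (F : Matrix (Fin k) (Fin l) ℝ)
    (c : Fin l → ℝ) (w : Fin k → ℝ) : c ⬝ᵥ (Fᵀ *ᵥ w) = (F *ᵥ c) ⬝ᵥ w := by
  rw [dotProduct_mulVec, vecMul_transpose]

lemma Rmat_transpose (W : Matrix (Fin n) (Fin n) ℝ) (hWsymm : W.IsSymm) (ρ : ℝ) :
    (Rmat W ρ)ᵀ = Rmat W ρ := by
  simp [Rmat, transpose_sub, transpose_smul, hWsymm.eq]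

lemma Rmat_posDef (W : Matrix (Fin n) (Fin n) ℝ)
    (hWsymm : W.IsSymm) (hW01 : ∀ i j, W i j = 0 ∨ W i j = 1)
    (hdeg : ∀ i, 1 ≤ degVec W i) {ρ : ℝ} (hρ : ρ ∈ Set.Ioo (0:ℝ) 1) :
    (Rmat W ρ).PosDef := by
  have hWnn : ∀ i j, 0 ≤ W i j := by
    intro i j; rcases hW01 i j with h | h <;> simp [h]
  rw [posDef_iff_dotProduct_mulVec]
  constructor
  · rw [Matrix.IsHermitian, conjTranspose_eq_transpose_of_trivial,
      Rmat_transpose W hWsymm]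
  intro y hy
  have hsy : star y = y := by simp
  rw [hsy]
  -- expand the quadratic form
  have hquad : y ⬝ᵥ ((Rmat W ρ) *ᵥ y)
      = (∑ i, degVec W i * y i ^ 2) - ρ * (y ⬝ᵥ (W *ᵥ y)) := by
    rw [Rmat, sub_mulVec, dotProduct_sub, smul_mulVec, dotProduct_smul]
    congr 1
    · simp only [dotProduct, mulVec_diagonal]
      exact Finset.sum_congr rfl fun i _ => by ring
  have hS : ∀ i, (0:ℝ) ≤ y i ^ 2 := fun i => sq_nonneg _
  set S : ℝ := ∑ i, degVec W i * y i ^ 2 with hSdef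
  have hQ : y ⬝ᵥ (W *ᵥ y) ≤ S := by
    have hexp : (0:ℝ) ≤ ∑ i, ∑ j, W i j * (y i - y j) ^ 2 := by
      apply Finset.sum_nonneg; intro i _
      apply Finset.sum_nonneg; intro j _
      exact mul_nonneg (hWnn i j) (sq_nonneg _)
    have h1 : ∑ i, ∑ j, W i j * y i ^ 2 = S := by
      simp only [hSdef, degVec, Finset.sum_mul]
    have h2 : ∑ i, ∑ j, W i j * y j ^ 2 = S := by
      rw [Finset.sum_comm]
      rw [← h1]
      exact Finset.sum_congr rfl fun j _ => Finset.sum_congr rfl fun i _ => by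
        rw [← hWsymm.apply i j]
    have h3 : y ⬝ᵥ (W *ᵥ y) = ∑ i, ∑ j, W i j * (y i * y j) := by
      simp [dotProduct, mulVec, Finset.mul_sum]
      exact Finset.sum_congr rfl fun i _ => Finset.sum_congr rfl fun j _ => by ring
    have hexpand : ∑ i, ∑ j, W i j * (y i - y j) ^ 2
        = 2 * S - 2 * ∑ i, ∑ j, W i j * (y i * y j) := by
      have : ∀ i j, W i j * (y i - y j) ^ 2
          = W i j * y i ^ 2 + W i j * y j ^ 2 - 2 * (W i j * (y i * y j)) := by
        intro i j; ring
      simp_rw [this, Finset.sum_sub_distrib, Finset.sum_add_distrib, ← Finset.mul_sum]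
      rw [h1, h2]; ring
    rw [h3]
    nlinarith [hexp, hexpand]
  have hSpos : 0 < S := by
    have hy' : ∃ i, y i ≠ 0 := by
      by_contra h; push_neg at h; exact hy (funext h)
    obtain ⟨i0, hi0⟩ := hy'
    have : (0:ℝ) < degVec W i0 * y i0 ^ 2 :=
      mul_pos (lt_of_lt_of_le one_pos (hdeg i0)) (by positivity)
    exact Finset.sum_pos' (fun i _ => mul_nonneg (le_trans zero_le_one (hdeg i)) (hS i))
      ⟨i0, Finset.mem_univ i0, this⟩
  rw [hquad]
  have : ρ * (y ⬝ᵥ (W *ᵥ y)) ≤ ρ * S := by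
    exact mul_le_mul_of_nonneg_left hQ (le_of_lt hρ.1)
  have h1S : ρ * S < S := by nlinarith [hρ.2, hSpos]
  linarith

lemma F_inj (F : Matrix (Fin n) (Fin (p + 1)) ℝ) (hF : F.rank = p + 1) :
    Function.Injective F.mulVec := by
  have h := LinearMap.finrank_range_add_finrank_ker F.mulVecLin
  rw [show Module.finrank ℝ (LinearMap.range F.mulVecLin) = F.rank from rfl] at h
  rw [hF, Module.finrank_fin_fun] at h
  have hker : Module.finrank ℝ (LinearMap.ker F.mulVecLin) = 0 := by omega
  have : LinearMap.ker F.mulVecLin = ⊥ := Submodule.finrank_eq_zero.mp hker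
  have hinj := LinearMap.ker_eq_bot.mp this
  intro a b hab
  exact hinj (by simpa [Matrix.mulVecLin_apply] using hab)

lemma M_posDef (R : Matrix (Fin n) (Fin n) ℝ) (hR : Rᵀ = R) (hRpd : R.PosDef)
    (F : Matrix (Fin n) (Fin (p + 1)) ℝ) (hFinj : Function.Injective F.mulVec) :
    (Fᵀ * R * F).PosDef := by
  rw [posDef_iff_dotProduct_mulVec]
  constructor
  · rw [Matrix.IsHermitian, conjTranspose_eq_transpose_of_trivial]
    rw [transpose_mul, transpose_mul, transpose_transpose, hR, Matrix.mul_assoc]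
  intro c hc
  have hsc : star c = c := by simp
  rw [hsc]
  have h1 : (Fᵀ * R * F) *ᵥ c = Fᵀ *ᵥ (R *ᵥ (F *ᵥ c)) := by
    rw [← mulVec_mulVec, ← mulVec_mulVec]
  rw [h1, dot_transpose_aux]
  have hFc : F *ᵥ c ≠ 0 := by
    intro h
    apply hc
    apply hFinj
    rw [h, mulVec_zero]
  have := hRpd.dotProduct_mulVec_pos hFc
  simpa using this

/-- key algebraic identity -/
lemma key_identity (R : Matrix (Fin n) (Fin n) ℝ) (hR : Rᵀ = R)
    (F : Matrix (Fin n) (Fin (p + 1)) ℝ) (hMunit : IsUnit (Fᵀ * R * F))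
    (x : Fin n → ℝ) (c : Fin (p + 1) → ℝ) :
    (x - F *ᵥ c) ⬝ᵥ (R *ᵥ (x - F *ᵥ c))
      = x ⬝ᵥ ((R - R * F * (Fᵀ * R * F)⁻¹ * Fᵀ * R) *ᵥ x)
        + (c - (Fᵀ * R * F)⁻¹ *ᵥ (Fᵀ *ᵥ (R *ᵥ x)))
            ⬝ᵥ ((Fᵀ * R * F) *ᵥ (c - (Fᵀ * R * F)⁻¹ *ᵥ (Fᵀ *ᵥ (R *ᵥ x)))) := by
  set M := Fᵀ * R * F with hMdef
  have hMsymm : Mᵀ = M := by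
    rw [hMdef, transpose_mul, transpose_mul, transpose_transpose, hR, Matrix.mul_assoc]
  have hMdet : IsUnit M.det := (Matrix.isUnit_iff_isUnit_det M).mp hMunit
  have hMMinv : M * M⁻¹ = 1 := Matrix.mul_nonsing_inv M hMdet
  set w := R *ᵥ x with hw
  set v := Fᵀ *ᵥ w with hv
  set u := M⁻¹ *ᵥ v with hu
  have hMu : M *ᵥ u = v := by rw [hu, mulVec_mulVec, hMMinv, one_mulVec]
  -- A: LHS
  have hA : (x - F *ᵥ c) ⬝ᵥ (R *ᵥ (x - F *ᵥ c))
      = x ⬝ᵥ w - 2 * (c ⬝ᵥ v) + c ⬝ᵥ (M *ᵥ c) := by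
    rw [mulVec_sub, sub_dotProduct, dotProduct_sub, dotProduct_sub]
    have e1 : x ⬝ᵥ (R *ᵥ (F *ᵥ c)) = c ⬝ᵥ v := by
      rw [dot_symm_aux R hR, ← hw, dotProduct_comm, ← dot_transpose_aux, ← hv]
    have e2 : (F *ᵥ c) ⬝ᵥ w = c ⬝ᵥ v := by
      rw [← dot_transpose_aux, ← hv]
    have e3 : (F *ᵥ c) ⬝ᵥ (R *ᵥ (F *ᵥ c)) = c ⬝ᵥ (M *ᵥ c) := by
      rw [← dot_transpose_aux, mulVec_mulVec, mulVec_mulVec]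
    rw [e1, e2, e3]; ring
  -- B: K-term
  have hB : x ⬝ᵥ ((R - R * F * M⁻¹ * Fᵀ * R) *ᵥ x)
      = x ⬝ᵥ w - v ⬝ᵥ u := by
    rw [sub_mulVec, dotProduct_sub, ← hw]
    congr 1
    have : (R * F * M⁻¹ * Fᵀ * R) *ᵥ x = R *ᵥ (F *ᵥ u) := by
      rw [hu, hv, hw]
      simp only [← mulVec_mulVec, Matrix.mul_assoc]
    rw [this, dot_symm_aux R hR, ← hw, dotProduct_comm, ← dot_transpose_aux, ← hv,
      dotProduct_comm]
  -- C: quadratic remainder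
  have hC : (c - u) ⬝ᵥ (M *ᵥ (c - u))
      = c ⬝ᵥ (M *ᵥ c) - 2 * (c ⬝ᵥ v) + v ⬝ᵥ u := by
    rw [mulVec_sub, sub_dotProduct, dotProduct_sub, dotProduct_sub, hMu]
    have e1 : c ⬝ᵥ v = c ⬝ᵥ v := rfl
    have e2 : u ⬝ᵥ (M *ᵥ c) = c ⬝ᵥ v := by
      rw [dot_symm_aux M hMsymm, hMu, dotProduct_comm]
    have e3 : u ⬝ᵥ v = v ⬝ᵥ u := dotProduct_comm _ _
    rw [e2, e3]; ring
  rw [hA, hB, hC]; ring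

end Aux

/-- for fixed `x`, if every degree is at least 1 and `F` has full column
rank, then `ρ ↦ T(x,ρ)` is concave on `(0,1)`. -/
theorem concavity_of_T {n p : ℕ} (W : Matrix (Fin n) (Fin n) ℝ)
    (hWsymm : W.IsSymm) (hW01 : ∀ i j, W i j = 0 ∨ W i j = 1) (hWdiag : ∀ i, W i i = 0)
    (hdeg : ∀ i, 1 ≤ degVec W i)
    (F : Matrix (Fin n) (Fin (p + 1)) ℝ) (hF : F.rank = p + 1)
    (x : Fin n → ℝ) :
    ConcaveOn ℝ (Set.Ioo (0 : ℝ) 1) (fun ρ => Tcrit W F x ρ) := by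
  have hFinj := F_inj F hF
  -- for each ρ in Ioo, the matrix Fᵀ R F is posdef hence a unit
  have hMpd : ∀ ρ ∈ Set.Ioo (0:ℝ) 1, (Fᵀ * Rmat W ρ * F).PosDef := fun ρ hρ =>
    M_posDef (Rmat W ρ) (Rmat_transpose W hWsymm ρ)
      (Rmat_posDef W hWsymm hW01 hdeg hρ) F hFinj
  -- f ρ ≤ g c ρ, with equality for the optimal c
  have hle : ∀ ρ ∈ Set.Ioo (0:ℝ) 1, ∀ c,
      Tcrit W F x ρ ≤ (x - F *ᵥ c) ⬝ᵥ (Rmat W ρ *ᵥ (x - F *ᵥ c)) := by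
    intro ρ hρ c
    have hpd := hMpd ρ hρ
    have hid := key_identity (Rmat W ρ) (Rmat_transpose W hWsymm ρ) F hpd.isUnit x c
    have hpsd := hpd.posSemidef
    set d := c - (Fᵀ * Rmat W ρ * F)⁻¹ *ᵥ (Fᵀ *ᵥ (Rmat W ρ *ᵥ x)) with hd
    have hnn : 0 ≤ d ⬝ᵥ ((Fᵀ * Rmat W ρ * F) *ᵥ d) := by
      have := hpsd.dotProduct_mulVec_nonneg d
      simpa using this
    have : Tcrit W F x ρ = x ⬝ᵥ ((Rmat W ρ
        - Rmat W ρ * F * (Fᵀ * Rmat W ρ * F)⁻¹ * Fᵀ * Rmat W ρ) *ᵥ x) := rfl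
    rw [this]
    linarith [hid, hnn]
  have heq : ∀ ρ ∈ Set.Ioo (0:ℝ) 1,
      Tcrit W F x ρ = (x - F *ᵥ ((Fᵀ * Rmat W ρ * F)⁻¹ *ᵥ (Fᵀ *ᵥ (Rmat W ρ *ᵥ x))))
        ⬝ᵥ (Rmat W ρ *ᵥ (x - F *ᵥ ((Fᵀ * Rmat W ρ * F)⁻¹ *ᵥ (Fᵀ *ᵥ (Rmat W ρ *ᵥ x))))) := by
    intro ρ hρ
    have hpd := hMpd ρ hρ
    have hid := key_identity (Rmat W ρ) (Rmat_transpose W hWsymm ρ) F hpd.isUnit x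
      ((Fᵀ * Rmat W ρ * F)⁻¹ *ᵥ (Fᵀ *ᵥ (Rmat W ρ *ᵥ x)))
    rw [hid]
    simp [Tcrit, Kmat]
  -- concavity
  refine ⟨convex_Ioo 0 1, ?_⟩
  intro ρ₁ h₁ ρ₂ h₂ a b ha hb hab
  set ρ := a • ρ₁ + b • ρ₂ with hρdef
  have hρmem : ρ ∈ Set.Ioo (0:ℝ) 1 := (convex_Ioo 0 1) h₁ h₂ ha hb hab
  set c := (Fᵀ * Rmat W ρ * F)⁻¹ *ᵥ (Fᵀ *ᵥ (Rmat W ρ *ᵥ x)) with hc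
  set y := x - F *ᵥ c with hy
  -- g is affine in ρ
  have hg : ∀ r : ℝ, y ⬝ᵥ (Rmat W r *ᵥ y)
      = y ⬝ᵥ (Matrix.diagonal (degVec W) *ᵥ y) - r * (y ⬝ᵥ (W *ᵥ y)) := by
    intro r
    rw [Rmat, sub_mulVec, dotProduct_sub, smul_mulVec, dotProduct_smul]
    simp
  have haff : y ⬝ᵥ (Rmat W ρ *ᵥ y)
      = a * (y ⬝ᵥ (Rmat W ρ₁ *ᵥ y)) + b * (y ⬝ᵥ (Rmat W ρ₂ *ᵥ y)) := by
    rw [hg ρ, hg ρ₁, hg ρ₂, hρdef]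
    simp only [smul_eq_mul]
    linear_combination (-(y ⬝ᵥ (Matrix.diagonal (degVec W) *ᵥ y))) * hab
  have he := heq ρ hρmem
  have hl1 := hle ρ₁ h₁ c
  have hl2 := hle ρ₂ h₂ c
  simp only [smul_eq_mul]
  calc a * Tcrit W F x ρ₁ + b * Tcrit W F x ρ₂
      ≤ a * (y ⬝ᵥ (Rmat W ρ₁ *ᵥ y)) + b * (y ⬝ᵥ (Rmat W ρ₂ *ᵥ y)) := by
        apply add_le_add
        · exact mul_le_mul_of_nonneg_left hl1 ha
        · exact mul_le_mul_of_nonneg_left hl2 hb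
    _ = y ⬝ᵥ (Rmat W ρ *ᵥ y) := haff.symm
    _ = Tcrit W F x ρ := he.symm
end

section
/- Fix x ∈ ℝⁿ, assume every node has degree mᵢ ≥ 1 and F has full column rank. Let μ be a probability measure on ℝ concentrated on the interval (0,1), and let ρ₀ = ∫ ρ dμ(ρ) be its mean. Then ∫ T(x,ρ) dμ(ρ) ≤ T(x,ρ₀). -/
open Matrix

/-! ### Auxiliary lemmas -/

lemma dot_mv_swap {a b : ℕ} (A : Matrix (Fin a) (Fin b) ℝ) (c : Fin b → ℝ) (u : Fin a → ℝ) :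
    (A *ᵥ c) ⬝ᵥ u = c ⬝ᵥ (Aᵀ *ᵥ u) := by
  rw [dotProduct_comm, dotProduct_mulVec, mulVec_transpose, dotProduct_comm]

lemma dot_symm_form {a : ℕ} {M : Matrix (Fin a) (Fin a) ℝ} (hM : Mᵀ = M)
    (u v : Fin a → ℝ) : u ⬝ᵥ M *ᵥ v = v ⬝ᵥ M *ᵥ u := by
  nth_rewrite 2 [← hM]
  rw [← dot_mv_swap, dotProduct_comm]

lemma conj_quad {n p : ℕ} (R : Matrix (Fin n) (Fin n) ℝ)
    (F : Matrix (Fin n) (Fin (p + 1)) ℝ) (c : Fin (p + 1) → ℝ) :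
    (F *ᵥ c) ⬝ᵥ R *ᵥ (F *ᵥ c) = c ⬝ᵥ (Fᵀ * R * F) *ᵥ c := by
  rw [dot_mv_swap]
  simp only [mulVec_mulVec, Matrix.mul_assoc]

lemma key_decomp {n p : ℕ} (R : Matrix (Fin n) (Fin n) ℝ) (hR : Rᵀ = R)
    (F : Matrix (Fin n) (Fin (p + 1)) ℝ)
    (hS : (Fᵀ * R * F) * (Fᵀ * R * F)⁻¹ = 1)
    (x : Fin n → ℝ) (b : Fin (p + 1) → ℝ) :
    (x - F *ᵥ b) ⬝ᵥ R *ᵥ (x - F *ᵥ b)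
      = x ⬝ᵥ (R - R * F * (Fᵀ * R * F)⁻¹ * Fᵀ * R) *ᵥ x
        + (b - (Fᵀ * R * F)⁻¹ *ᵥ ((Fᵀ * R) *ᵥ x)) ⬝ᵥ
            (Fᵀ * R * F) *ᵥ (b - (Fᵀ * R * F)⁻¹ *ᵥ ((Fᵀ * R) *ᵥ x)) := by
  set w : Fin (p + 1) → ℝ := (Fᵀ * R * F)⁻¹ *ᵥ ((Fᵀ * R) *ᵥ x) with hw
  set z : Fin n → ℝ := x - F *ᵥ w with hz
  have h0 : (Fᵀ * R) *ᵥ z = 0 := by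
    rw [hz, mulVec_sub, sub_eq_zero, hw]
    simp only [mulVec_mulVec]
    rw [← Matrix.mul_assoc, ← Matrix.mul_assoc, hS, Matrix.one_mul]
  have horth : ∀ c : Fin (p + 1) → ℝ, (F *ᵥ c) ⬝ᵥ R *ᵥ z = 0 := by
    intro c
    rw [dot_mv_swap, mulVec_mulVec, h0, dotProduct_zero]
  have horth' : ∀ c : Fin (p + 1) → ℝ, z ⬝ᵥ R *ᵥ (F *ᵥ c) = 0 := fun c => by
    rw [dot_symm_form hR]; exact horth c
  have hy : x - F *ᵥ b = z - F *ᵥ (b - w) := by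
    rw [hz, mulVec_sub]; abel
  have hzRz : z ⬝ᵥ R *ᵥ z = x ⬝ᵥ (R - R * F * (Fᵀ * R * F)⁻¹ * Fᵀ * R) *ᵥ x := by
    have e1 : z ⬝ᵥ R *ᵥ z = x ⬝ᵥ R *ᵥ z := by
      nth_rewrite 1 [hz]
      rw [sub_dotProduct, horth w, sub_zero]
    rw [e1, hz, mulVec_sub, dotProduct_sub, hw]
    simp only [mulVec_mulVec]
    rw [sub_mulVec, dotProduct_sub]
    congr 2
    simp only [Matrix.mul_assoc]
  have hexpand : ∀ u v : Fin n → ℝ, (u - v) ⬝ᵥ R *ᵥ (u - v)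
      = u ⬝ᵥ R *ᵥ u - u ⬝ᵥ R *ᵥ v - v ⬝ᵥ R *ᵥ u + v ⬝ᵥ R *ᵥ v := by
    intro u v
    rw [mulVec_sub, dotProduct_sub, sub_dotProduct, sub_dotProduct]
    ring
  rw [hy, hexpand z (F *ᵥ (b - w)), horth (b - w), horth' (b - w),
    conj_quad R F (b - w), hzRz]
  ring

lemma quad_diag {n : ℕ} (d : Fin n → ℝ) (y : Fin n → ℝ) :
    y ⬝ᵥ (Matrix.diagonal d) *ᵥ y = ∑ i, d i * y i ^ 2 := by
  simp only [dotProduct, mulVec_diagonal]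
  exact Finset.sum_congr rfl fun i _ => by ring

lemma quad_W {n : ℕ} (W : Matrix (Fin n) (Fin n) ℝ) (y : Fin n → ℝ) :
    y ⬝ᵥ W *ᵥ y = ∑ i, ∑ j, y i * (W i j * y j) := by
  simp only [dotProduct, mulVec, Finset.mul_sum]

lemma quad_Rmat {n : ℕ} (W : Matrix (Fin n) (Fin n) ℝ) (ρ : ℝ) (y : Fin n → ℝ) :
    y ⬝ᵥ (Rmat W ρ) *ᵥ y
      = (∑ i, degVec W i * y i ^ 2) - ρ * (y ⬝ᵥ W *ᵥ y) := by
  rw [Rmat, sub_mulVec, dotProduct_sub, quad_diag, smul_mulVec, dotProduct_smul,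
    smul_eq_mul]

lemma quadW_le {n : ℕ} {W : Matrix (Fin n) (Fin n) ℝ} (hWsymm : W.IsSymm)
    (hW0 : ∀ i j, 0 ≤ W i j) (y : Fin n → ℝ) :
    y ⬝ᵥ W *ᵥ y ≤ ∑ i, degVec W i * y i ^ 2 := by
  have h0 : 0 ≤ ∑ i, ∑ j, W i j * (y i - y j) ^ 2 :=
    Finset.sum_nonneg fun i _ => Finset.sum_nonneg fun j _ =>
      mul_nonneg (hW0 i j) (sq_nonneg _)
  have hswap : ∑ i, ∑ j, W i j * y j ^ 2 = ∑ i, degVec W i * y i ^ 2 := by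
    rw [Finset.sum_comm]
    refine Finset.sum_congr rfl fun j _ => ?_
    rw [degVec, Finset.sum_mul]
    exact Finset.sum_congr rfl fun i _ => by rw [hWsymm.apply i j]
  have hexp : ∑ i, ∑ j, W i j * (y i - y j) ^ 2
      = (∑ i, degVec W i * y i ^ 2) - 2 * (∑ i, ∑ j, y i * (W i j * y j))
        + ∑ i, ∑ j, W i j * y j ^ 2 := by
    rw [Finset.mul_sum, ← Finset.sum_sub_distrib, ← Finset.sum_add_distrib]
    refine Finset.sum_congr rfl fun i _ => ?_
    rw [degVec, Finset.sum_mul, Finset.mul_sum, ← Finset.sum_sub_distrib,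
      ← Finset.sum_add_distrib]
    exact Finset.sum_congr rfl fun j _ => by ring
  rw [quad_W]
  rw [hexp, hswap] at h0
  linarith

lemma quad_Rmat_pos {n : ℕ} {W : Matrix (Fin n) (Fin n) ℝ} (hWsymm : W.IsSymm)
    (hW0 : ∀ i j, 0 ≤ W i j) (hdeg : ∀ i, 1 ≤ degVec W i)
    {ρ : ℝ} (hρ0 : 0 ≤ ρ) (hρ1 : ρ < 1) {y : Fin n → ℝ} (hy : y ≠ 0) :
    0 < y ⬝ᵥ (Rmat W ρ) *ᵥ y := by
  have hsq : 0 < ∑ i, y i ^ 2 := by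
    rcases Function.ne_iff.mp hy with ⟨i, hi⟩
    exact Finset.sum_pos' (fun j _ => sq_nonneg _)
      ⟨i, Finset.mem_univ i, sq_pos_of_ne_zero hi⟩
  have hd : ∑ i, y i ^ 2 ≤ ∑ i, degVec W i * y i ^ 2 :=
    Finset.sum_le_sum fun i _ => by nlinarith [hdeg i, sq_nonneg (y i)]
  have hW := quadW_le hWsymm hW0 y
  rw [quad_Rmat]
  nlinarith

lemma mulVec_injective_of_rank {n p : ℕ} (F : Matrix (Fin n) (Fin (p + 1)) ℝ)
    (hF : F.rank = p + 1) : ∀ c : Fin (p + 1) → ℝ, F *ᵥ c = 0 → c = 0 := by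
  have h1 := LinearMap.finrank_range_add_finrank_ker F.mulVecLin
  rw [show Module.finrank ℝ (LinearMap.range F.mulVecLin) = F.rank from rfl, hF,
    Module.finrank_pi] at h1
  have hker : LinearMap.ker F.mulVecLin = ⊥ := by
    have h2 : Module.finrank ℝ (LinearMap.ker F.mulVecLin) = 0 := by
      simp only [Fintype.card_fin] at h1
      omega
    exact Submodule.finrank_eq_zero.mp h2
  intro c hc
  have : c ∈ LinearMap.ker F.mulVecLin := hc
  rwa [hker, Submodule.mem_bot] at this

/-- for a probability measure `μ` concentrated on `(0,1)` with mean `ρ₀`,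
`∫ T(x,ρ) dμ(ρ) ≤ T(x,ρ₀)`. -/
theorem integral_T_le_T_mean {n p : ℕ} (W : Matrix (Fin n) (Fin n) ℝ)
    (hWsymm : W.IsSymm) (hW01 : ∀ i j, W i j = 0 ∨ W i j = 1) (hWdiag : ∀ i, W i i = 0)
    (hdeg : ∀ i, 1 ≤ degVec W i)
    (F : Matrix (Fin n) (Fin (p + 1)) ℝ) (hF : F.rank = p + 1)
    (x : Fin n → ℝ)
    (μ : MeasureTheory.Measure ℝ) [MeasureTheory.IsProbabilityMeasure μ]
    (hsupp : ∀ᵐ ρ ∂μ, ρ ∈ Set.Ioo (0 : ℝ) 1)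
    (hint : MeasureTheory.Integrable (fun ρ => Tcrit W F x ρ) μ)
    (hintid : MeasureTheory.Integrable id μ) :
    ∫ ρ, Tcrit W F x ρ ∂μ ≤ Tcrit W F x (∫ ρ, ρ ∂μ) := by
  classical
  have hW0 : ∀ i j, 0 ≤ W i j := by
    intro i j; rcases hW01 i j with h | h <;> rw [h] <;> norm_num
  have hintid' : MeasureTheory.Integrable (fun ρ : ℝ => ρ) μ := hintid
  set ρ₀ : ℝ := ∫ ρ, ρ ∂μ with hρ₀def
  -- bounds on the mean
  have hρ₀nn : 0 ≤ ρ₀ :=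
    MeasureTheory.integral_nonneg_of_ae (hsupp.mono fun ρ h => le_of_lt h.1)
  have hρ₀lt : ρ₀ < 1 := by
    have hint1 : MeasureTheory.Integrable (fun ρ : ℝ => 1 - ρ) μ :=
      (MeasureTheory.integrable_const 1).sub hintid'
    have hpos : 0 < ∫ ρ, (1 - ρ) ∂μ := by
      rw [MeasureTheory.integral_pos_iff_support_of_nonneg_ae
        (hsupp.mono fun ρ h => by simp only [Pi.zero_apply]; linarith [h.2]) hint1]
      have hnull : μ (Function.support fun ρ : ℝ => 1 - ρ)ᶜ = 0 := by
        refine MeasureTheory.measure_mono_null ?_ (MeasureTheory.ae_iff.mp hsupp)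
        intro ρ hρ
        simp only [Set.mem_compl_iff, Function.mem_support, not_not] at hρ
        simp only [Set.mem_setOf_eq, Set.mem_Ioo, not_and, not_lt]
        intro _
        linarith [sub_eq_zero.mp hρ]
      by_contra h
      push_neg at h
      have h0 : μ (Function.support fun ρ : ℝ => 1 - ρ) = 0 := le_antisymm h zero_le
      have : (1 : ENNReal) ≤ 0 := by
        calc (1 : ENNReal) = μ Set.univ := (MeasureTheory.measure_univ).symm
          _ = μ ((Function.support fun ρ : ℝ => 1 - ρ) ∪
                (Function.support fun ρ : ℝ => 1 - ρ)ᶜ) := by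
                rw [Set.union_compl_self]
          _ ≤ μ (Function.support fun ρ : ℝ => 1 - ρ) +
                μ (Function.support fun ρ : ℝ => 1 - ρ)ᶜ := MeasureTheory.measure_union_le _ _
          _ = 0 := by rw [h0, hnull, add_zero]
      simp at this
    have heq : ∫ ρ, (1 - ρ) ∂μ = 1 - ρ₀ := by
      rw [MeasureTheory.integral_sub (MeasureTheory.integrable_const 1) hintid']
      simp [MeasureTheory.measure_univ, hρ₀def]
    rw [heq] at hpos
    linarith
  -- matrix facts
  have hRT : ∀ ρ : ℝ, (Rmat W ρ)ᵀ = Rmat W ρ := by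
    intro ρ
    rw [Rmat, transpose_sub, transpose_smul, diagonal_transpose, hWsymm]
  have hFinj := mulVec_injective_of_rank F hF
  have hSpos : ∀ ρ : ℝ, 0 ≤ ρ → ρ < 1 → ∀ c : Fin (p + 1) → ℝ, c ≠ 0 →
      0 < c ⬝ᵥ (Fᵀ * Rmat W ρ * F) *ᵥ c := by
    intro ρ h0 h1 c hc
    rw [← conj_quad]
    refine quad_Rmat_pos hWsymm hW0 hdeg h0 h1 ?_
    intro hFc
    exact hc (hFinj c hFc)
  have hSdet : ∀ ρ : ℝ, 0 ≤ ρ → ρ < 1 → IsUnit (Fᵀ * Rmat W ρ * F).det := by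
    intro ρ h0 h1
    rw [isUnit_iff_ne_zero]
    intro hdet
    obtain ⟨v, hv, hv0⟩ := (Matrix.exists_mulVec_eq_zero_iff).mpr hdet
    have := hSpos ρ h0 h1 v hv
    rw [hv0, dotProduct_zero] at this
    exact lt_irrefl 0 this
  have hSinv : ∀ ρ : ℝ, 0 ≤ ρ → ρ < 1 →
      (Fᵀ * Rmat W ρ * F) * (Fᵀ * Rmat W ρ * F)⁻¹ = 1 := fun ρ h0 h1 =>
    Matrix.mul_nonsing_inv _ (hSdet ρ h0 h1)
  -- the optimal coefficient at ρ₀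
  set b₀ : Fin (p + 1) → ℝ :=
    (Fᵀ * Rmat W ρ₀ * F)⁻¹ *ᵥ ((Fᵀ * Rmat W ρ₀) *ᵥ x) with hb₀
  set y₀ : Fin n → ℝ := x - F *ᵥ b₀ with hy₀
  -- equality at ρ₀
  have hT₀ : Tcrit W F x ρ₀ = y₀ ⬝ᵥ (Rmat W ρ₀) *ᵥ y₀ := by
    have hk := key_decomp (Rmat W ρ₀) (hRT ρ₀) F (hSinv ρ₀ hρ₀nn hρ₀lt) x b₀
    rw [← hb₀, sub_self] at hk
    simp only [zero_dotProduct, add_zero] at hk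
    rw [Tcrit, Kmat, hk]
  -- inequality at every ρ ∈ (0,1)
  have hle : ∀ ρ ∈ Set.Ioo (0 : ℝ) 1,
      Tcrit W F x ρ ≤ y₀ ⬝ᵥ (Rmat W ρ) *ᵥ y₀ := by
    intro ρ hρ
    have hk := key_decomp (Rmat W ρ) (hRT ρ) F (hSinv ρ hρ.1.le hρ.2) x b₀
    set c : Fin (p + 1) → ℝ :=
      b₀ - (Fᵀ * Rmat W ρ * F)⁻¹ *ᵥ ((Fᵀ * Rmat W ρ) *ᵥ x) with hc
    have hcnn : 0 ≤ c ⬝ᵥ (Fᵀ * Rmat W ρ * F) *ᵥ c := by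
      rcases eq_or_ne c 0 with h | h
      · rw [h]; simp
      · exact le_of_lt (hSpos ρ hρ.1.le hρ.2 c h)
    rw [Tcrit, Kmat]
    rw [← hy₀] at hk
    linarith [hk, hcnn]
  -- affine representation
  set A : ℝ := y₀ ⬝ᵥ (Matrix.diagonal (degVec W)) *ᵥ y₀ with hA
  set B : ℝ := y₀ ⬝ᵥ W *ᵥ y₀ with hB
  have haff : ∀ ρ : ℝ, y₀ ⬝ᵥ (Rmat W ρ) *ᵥ y₀ = A - ρ * B := by
    intro ρ
    rw [quad_Rmat, hA, hB, quad_diag]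
  have hgint : MeasureTheory.Integrable (fun ρ : ℝ => A - ρ * B) μ :=
    (MeasureTheory.integrable_const A).sub (hintid'.mul_const B)
  have hmono : ∫ ρ, Tcrit W F x ρ ∂μ ≤ ∫ ρ, (A - ρ * B) ∂μ := by
    refine MeasureTheory.integral_mono_ae hint hgint ?_
    refine hsupp.mono fun ρ hρ => ?_
    show Tcrit W F x ρ ≤ A - ρ * B
    rw [← haff ρ]
    exact hle ρ hρ
  have hgval : ∫ ρ, (A - ρ * B) ∂μ = A - ρ₀ * B := by
    rw [MeasureTheory.integral_sub (MeasureTheory.integrable_const A)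
      (hintid'.mul_const B)]
    rw [MeasureTheory.integral_mul_const]
    simp [MeasureTheory.measure_univ, hρ₀def]
  calc ∫ ρ, Tcrit W F x ρ ∂μ ≤ ∫ ρ, (A - ρ * B) ∂μ := hmono
    _ = A - ρ₀ * B := hgval
    _ = y₀ ⬝ᵥ (Rmat W ρ₀) *ᵥ y₀ := (haff ρ₀).symm
    _ = Tcrit W F x ρ₀ := hT₀.symm
end

section
/- Assume every node has degree mᵢ ≥ 1, F has full column rank, ρ₀ ∈ (0,1), and x ∈ {−1,1}ⁿ. Let λ_min > 0 and λ_max be the smallest and largest eigenvalues of the symmetric positive definite matrix D − ρ₀W, let r be the spectral radius of W (the maximum of the absolute values of the eigenvalues of the symmetric matrix W), and let s = s(ρ₀) = [Iₙ − F(Fᵀ(D−ρ₀W)F)⁻¹Fᵀ(D−ρ₀W)]x. Then sᵀ W F [Fᵀ(D−ρ₀W)F]⁻¹ Fᵀ W s ≤ min{ n·λ_max , (1+ρ₀)·m } · r² / λ_min². -/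
open Matrix

/-- The residual vector `s(ρ) = [Iₙ - F(Fᵀ(D-ρW)F)⁻¹Fᵀ(D-ρW)]x`. -/
noncomputable def sresid {n p : ℕ} (W : Matrix (Fin n) (Fin n) ℝ)
    (F : Matrix (Fin n) (Fin (p + 1)) ℝ) (x : Fin n → ℝ) (ρ : ℝ) : Fin n → ℝ :=
  ((1 : Matrix (Fin n) (Fin n) ℝ) - F * (Fᵀ * Rmat W ρ * F)⁻¹ * Fᵀ * Rmat W ρ).mulVec x

section helpers

variable {n m : ℕ}

lemma mulVec_dot (M : Matrix (Fin n) (Fin m) ℝ) (a : Fin m → ℝ) (b : Fin n → ℝ) :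
    (M *ᵥ a) ⬝ᵥ b = a ⬝ᵥ (Mᵀ *ᵥ b) := by
  rw [dotProduct_comm, dotProduct_mulVec, ← mulVec_transpose, dotProduct_comm]

lemma dot_cs (a b : Fin n → ℝ) : (a ⬝ᵥ b) ^ 2 ≤ (a ⬝ᵥ a) * (b ⬝ᵥ b) := by
  simpa [dotProduct, pow_two] using Finset.sum_mul_sq_le_sq_mul_sq Finset.univ a b

lemma dot_self_nonneg (a : Fin n → ℝ) : 0 ≤ a ⬝ᵥ a :=
  Finset.sum_nonneg fun i _ => mul_self_nonneg _

lemma herm_transpose {M : Matrix (Fin n) (Fin n) ℝ} (h : M.IsHermitian) : Mᵀ = M := by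
  ext i j
  have := congrFun (congrFun h.eq i) j
  simpa [Matrix.conjTranspose_apply] using this

lemma psd_cs {R : Matrix (Fin n) (Fin n) ℝ} (hR : R.PosSemidef) (a g : Fin n → ℝ) :
    (a ⬝ᵥ R *ᵥ g) ^ 2 ≤ (a ⬝ᵥ R *ᵥ a) * (g ⬝ᵥ R *ᵥ g) := by
  have hRt : Rᵀ = R := herm_transpose hR.isHermitian
  have hsym : g ⬝ᵥ R *ᵥ a = a ⬝ᵥ R *ᵥ g := by
    rw [dotProduct_comm, mulVec_dot, hRt]
  have hq : ∀ t : ℝ, 0 ≤ (a ⬝ᵥ R *ᵥ a) + 2 * t * (a ⬝ᵥ R *ᵥ g) + t ^ 2 * (g ⬝ᵥ R *ᵥ g) := by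
    intro t
    have h := hR.dotProduct_mulVec_nonneg (a + t • g)
    have hs : star (a + t • g) = a + t • g := funext fun i => star_trivial _
    simp only [hs, mulVec_add, mulVec_smul, dotProduct_add, add_dotProduct, dotProduct_smul,
      smul_dotProduct, smul_eq_mul, hsym] at h
    nlinarith [h]
  have hG : 0 ≤ g ⬝ᵥ R *ᵥ g := by
    have h := hR.dotProduct_mulVec_nonneg g
    rwa [show star g = g from funext fun i => star_trivial _] at h
  generalize a ⬝ᵥ R *ᵥ a = A at hq ⊢
  generalize a ⬝ᵥ R *ᵥ g = C at hq ⊢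
  generalize g ⬝ᵥ R *ᵥ g = G at hq hG ⊢
  have hA0 := hq 0
  rcases hG.eq_or_lt with h0 | h0
  · subst h0
    have hC : C = 0 := by
      by_contra hC
      have ht : (-(A + 1) / (2 * C)) * (2 * C) = -(A + 1) :=
        div_mul_cancel₀ _ (mul_ne_zero two_ne_zero hC)
      have h1 := hq (-(A + 1) / (2 * C))
      nlinarith [h1, ht, hA0]
    subst hC
    simp
  · have ht : (-C / G) * G = -C := div_mul_cancel₀ (-C) h0.ne'
    have h1 := hq (-C / G)
    have h2 : 0 ≤ A + (-C / G) * C := by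
      have e : (-C / G) ^ 2 * G = (-C / G) * ((-C / G) * G) := by ring
      rw [e, ht] at h1
      linarith [h1]
    have h4 : 0 ≤ (A + (-C / G) * C) * G := mul_nonneg h2 h0.le
    have h5 : (A + (-C / G) * C) * G = A * G - C ^ 2 := by linear_combination C * ht
    linarith [h4, h5]

lemma conj_spectral_sum {A U : Matrix (Fin n) (Fin n) ℝ} {d : Fin n → ℝ}
    (hU1 : U * Uᵀ = 1) (hU2 : Uᵀ * U = 1)
    (hAeq : A = U * Matrix.diagonal d * Uᵀ) (v : Fin n → ℝ) :
    ∃ w : Fin n → ℝ, (v ⬝ᵥ A *ᵥ v = ∑ i, d i * w i ^ 2) ∧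
      (v ⬝ᵥ v = ∑ i, w i ^ 2) ∧
      ((A *ᵥ v) ⬝ᵥ (A *ᵥ v) = ∑ i, (d i) ^ 2 * w i ^ 2) := by
  refine ⟨Uᵀ *ᵥ v, ?_, ?_, ?_⟩
  · have : v ⬝ᵥ A *ᵥ v = (Uᵀ *ᵥ v) ⬝ᵥ (Matrix.diagonal d *ᵥ (Uᵀ *ᵥ v)) := by
      rw [hAeq, ← mulVec_mulVec, ← mulVec_mulVec, dotProduct_comm, mulVec_dot, dotProduct_comm]
    rw [this]
    simp only [dotProduct, mulVec_diagonal]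
    exact Finset.sum_congr rfl fun i _ => by ring
  · have h2 : (Uᵀ *ᵥ v) ⬝ᵥ (Uᵀ *ᵥ v) = v ⬝ᵥ v := by
      rw [mulVec_dot, transpose_transpose, mulVec_mulVec, hU1, one_mulVec]
    rw [← h2]
    simp only [dotProduct]
    exact Finset.sum_congr rfl fun i _ => by ring
  · have hAv : A *ᵥ v = U *ᵥ (Matrix.diagonal d *ᵥ (Uᵀ *ᵥ v)) := by
      rw [hAeq, ← mulVec_mulVec, ← mulVec_mulVec]
    have hUnorm : ∀ y : Fin n → ℝ, (U *ᵥ y) ⬝ᵥ (U *ᵥ y) = y ⬝ᵥ y := by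
      intro y; rw [mulVec_dot, mulVec_mulVec, hU2, one_mulVec]
    rw [hAv, hUnorm]
    simp only [dotProduct, mulVec_diagonal]
    exact Finset.sum_congr rfl fun i _ => by ring

lemma spectral_sum {A : Matrix (Fin n) (Fin n) ℝ} (hA : A.IsHermitian) (v : Fin n → ℝ) :
    ∃ w : Fin n → ℝ, (v ⬝ᵥ A *ᵥ v = ∑ i, hA.eigenvalues i * w i ^ 2) ∧
      (v ⬝ᵥ v = ∑ i, w i ^ 2) ∧
      ((A *ᵥ v) ⬝ᵥ (A *ᵥ v) = ∑ i, (hA.eigenvalues i) ^ 2 * w i ^ 2) := by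
  have hstar : star (hA.eigenvectorUnitary : Matrix (Fin n) (Fin n) ℝ)
      = (hA.eigenvectorUnitary : Matrix (Fin n) (Fin n) ℝ)ᵀ := by
    ext i j; simp [Matrix.star_apply]
  refine conj_spectral_sum (U := (hA.eigenvectorUnitary : Matrix (Fin n) (Fin n) ℝ)) ?_ ?_ ?_ v
  · rw [← hstar]; exact (Matrix.mem_unitaryGroup_iff).mp (hA.eigenvectorUnitary).2
  · rw [← hstar]; exact (Matrix.mem_unitaryGroup_iff').mp (hA.eigenvectorUnitary).2
  · have := hA.spectral_theorem
    rw [Unitary.conjStarAlgAut_apply] at this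
    rwa [hstar, RCLike.ofReal_real_eq_id, Function.id_comp] at this

lemma rayleigh_lower {A : Matrix (Fin n) (Fin n) ℝ} (hA : A.IsHermitian) {c : ℝ}
    (h : ∀ i, c ≤ hA.eigenvalues i) (v : Fin n → ℝ) :
    c * (v ⬝ᵥ v) ≤ v ⬝ᵥ A *ᵥ v := by
  obtain ⟨w, h1, h2, _⟩ := spectral_sum hA v
  rw [h1, h2, Finset.mul_sum]
  exact Finset.sum_le_sum fun i _ => mul_le_mul_of_nonneg_right (h i) (sq_nonneg _)

lemma rayleigh_upper {A : Matrix (Fin n) (Fin n) ℝ} (hA : A.IsHermitian) {c : ℝ}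
    (h : ∀ i, hA.eigenvalues i ≤ c) (v : Fin n → ℝ) :
    v ⬝ᵥ A *ᵥ v ≤ c * (v ⬝ᵥ v) := by
  obtain ⟨w, h1, h2, _⟩ := spectral_sum hA v
  rw [h1, h2, Finset.mul_sum]
  exact Finset.sum_le_sum fun i _ => mul_le_mul_of_nonneg_right (h i) (sq_nonneg _)

lemma rayleigh_sq {A : Matrix (Fin n) (Fin n) ℝ} (hA : A.IsHermitian) {r : ℝ}
    (h : ∀ i, |hA.eigenvalues i| ≤ r) (v : Fin n → ℝ) :
    (A *ᵥ v) ⬝ᵥ (A *ᵥ v) ≤ r ^ 2 * (v ⬝ᵥ v) := by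
  obtain ⟨w, _, h2, h3⟩ := spectral_sum hA v
  rw [h3, h2, Finset.mul_sum]
  refine Finset.sum_le_sum fun i _ => mul_le_mul_of_nonneg_right ?_ (sq_nonneg _)
  calc (hA.eigenvalues i) ^ 2 = |hA.eigenvalues i| ^ 2 := (sq_abs _).symm
    _ ≤ r ^ 2 := pow_le_pow_left₀ (abs_nonneg _) (h i) 2

end helpers

set_option maxHeartbeats 2000000 in
/-- eigenvalue bound on `sᵀ W F [Fᵀ(D-ρ₀W)F]⁻¹ Fᵀ W s` for `x ∈ {-1,1}ⁿ`,
where `λmin > 0`, `λmax` are the smallest/largest eigenvalues of `D-ρ₀W` and `r` is the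
spectral radius of `W`. -/
theorem sandwich_bound {n p : ℕ} (W : Matrix (Fin n) (Fin n) ℝ)
    (hWsymm : W.IsSymm) (hW01 : ∀ i j, W i j = 0 ∨ W i j = 1) (hWdiag : ∀ i, W i i = 0)
    (hdeg : ∀ i, 1 ≤ degVec W i)
    (F : Matrix (Fin n) (Fin (p + 1)) ℝ) (hF : F.rank = p + 1)
    (ρ₀ : ℝ) (hρ₀ : ρ₀ ∈ Set.Ioo (0 : ℝ) 1)
    (x : Fin n → ℝ) (hx : ∀ i, x i = 1 ∨ x i = -1)
    (hA : (Rmat W ρ₀).IsHermitian) (hWh : W.IsHermitian)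
    (lammin lammax r : ℝ)
    (hmin : IsLeast (Set.range hA.eigenvalues) lammin)
    (hminpos : 0 < lammin)
    (hmax : IsGreatest (Set.range hA.eigenvalues) lammax)
    (hr : IsGreatest (Set.range fun i => |hWh.eigenvalues i|) r) :
    sresid W F x ρ₀ ⬝ᵥ
        (W * F * (Fᵀ * Rmat W ρ₀ * F)⁻¹ * Fᵀ * W).mulVec (sresid W F x ρ₀) ≤
      min ((n : ℝ) * lammax) ((1 + ρ₀) * ∑ i, degVec W i) * r ^ 2 / lammin ^ 2 := by
  -- eigenvalue facts
  have heigmin : ∀ i, lammin ≤ hA.eigenvalues i := fun i => hmin.2 ⟨i, rfl⟩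
  have heigmax : ∀ i, hA.eigenvalues i ≤ lammax := fun i => hmax.2 ⟨i, rfl⟩
  have heigr : ∀ i, |hWh.eigenvalues i| ≤ r := fun i => hr.2 ⟨i, rfl⟩
  have hrnn : 0 ≤ r := by
    obtain ⟨i, hi⟩ := hr.1
    exact hi ▸ abs_nonneg _
  have hstarv : ∀ (k : ℕ) (v : Fin k → ℝ), star v = v := fun k v => funext fun i => star_trivial _
  have hdotpos : ∀ v : Fin n → ℝ, v ≠ 0 → 0 < v ⬝ᵥ v := by
    intro v hv
    rcases lt_or_eq_of_le (dot_self_nonneg v) with h | h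
    · exact h
    · exact absurd (dotProduct_self_eq_zero.mp h.symm) hv
  -- facts about R := Rmat W ρ₀, stated for an opaque R
  obtain ⟨R, hRdef⟩ : ∃ R : Matrix (Fin n) (Fin n) ℝ, R = Rmat W ρ₀ := ⟨_, rfl⟩
  have hRayL : ∀ v, lammin * (v ⬝ᵥ v) ≤ v ⬝ᵥ R *ᵥ v := by
    rw [hRdef]; exact rayleigh_lower hA heigmin
  have hRayU : ∀ v, v ⬝ᵥ R *ᵥ v ≤ lammax * (v ⬝ᵥ v) := by
    rw [hRdef]; exact rayleigh_upper hA heigmax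
  have hW2 : ∀ v, (W *ᵥ v) ⬝ᵥ (W *ᵥ v) ≤ r ^ 2 * (v ⬝ᵥ v) := rayleigh_sq hWh heigr
  have hWt : Wᵀ = W := herm_transpose hWh
  have hRherm : R.IsHermitian := hRdef ▸ hA
  have hRt : Rᵀ = R := herm_transpose hRherm
  have hRpd : R.PosDef := by
    refine Matrix.PosDef.of_dotProduct_mulVec_pos hRherm fun v hv => ?_
    rw [hstarv n]
    exact lt_of_lt_of_le (mul_pos hminpos (hdotpos v hv)) (hRayL v)
  -- F is injective on mulVec
  have hFinj : ∀ y : Fin (p+1) → ℝ, F *ᵥ y = 0 → y = 0 := by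
    intro y hy
    have hker : LinearMap.ker F.mulVecLin = ⊥ := by
      have h1 := LinearMap.finrank_range_add_finrank_ker F.mulVecLin
      rw [show Module.finrank ℝ ↥(LinearMap.range F.mulVecLin) = F.rank from rfl, hF,
        Module.finrank_fin_fun] at h1
      have h2 : Module.finrank ℝ (LinearMap.ker F.mulVecLin) = 0 := by omega
      exact Submodule.finrank_eq_zero.mp h2
    have : y ∈ LinearMap.ker F.mulVecLin := by
      rw [LinearMap.mem_ker, Matrix.mulVecLin_apply]; exact hy
    rwa [hker, Submodule.mem_bot] at this
  -- B := Fᵀ R F is positive definite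
  have hFconj : Fᴴ = Fᵀ := by ext i j; simp [Matrix.conjTranspose_apply]
  have hBdot : ∀ (M : Matrix (Fin n) (Fin n) ℝ) (y z : Fin (p+1) → ℝ),
      y ⬝ᵥ (Fᵀ * M * F) *ᵥ z = (F *ᵥ y) ⬝ᵥ M *ᵥ (F *ᵥ z) := by
    intro M y z
    rw [← mulVec_mulVec, ← mulVec_mulVec, ← mulVec_dot F y, mulVec_mulVec]
  obtain ⟨B, hBdef⟩ : ∃ B : Matrix (Fin (p+1)) (Fin (p+1)) ℝ, B = Fᵀ * R * F := ⟨_, rfl⟩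
  have hBherm : B.IsHermitian := by
    rw [hBdef, ← hFconj]
    exact Matrix.isHermitian_conjTranspose_mul_mul F hRherm
  have hBpd : B.PosDef := by
    refine Matrix.PosDef.of_dotProduct_mulVec_pos hBherm fun y hy => ?_
    rw [hstarv (p+1), hBdef, hBdot]
    have hFy : F *ᵥ y ≠ 0 := fun h => hy (hFinj y h)
    have := hRpd.dotProduct_mulVec_pos hFy
    rwa [hstarv n] at this
  have hBipd : B⁻¹.PosDef := hBpd.inv
  have hBit : B⁻¹ᵀ = B⁻¹ := herm_transpose hBipd.isHermitian
  have hdetB : IsUnit B.det := isUnit_iff_ne_zero.mpr hBpd.det_pos.ne'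
  have hBBi : B * B⁻¹ = 1 := Matrix.mul_nonsing_inv B hdetB
  have hBcancel : ∀ z : Fin (p+1) → ℝ, B *ᵥ (B⁻¹ *ᵥ z) = z := by
    intro z; rw [mulVec_mulVec, hBBi, one_mulVec]
  have hdetR : IsUnit R.det := isUnit_iff_ne_zero.mpr hRpd.det_pos.ne'
  have hRRi : R * R⁻¹ = 1 := Matrix.mul_nonsing_inv R hdetR
  -- fold the goal
  obtain ⟨s, hsdef⟩ : ∃ s : Fin n → ℝ, s = sresid W F x ρ₀ := ⟨_, rfl⟩
  rw [← hsdef, ← hRdef, ← hBdef]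
  -- key vectors
  obtain ⟨v, hvdef⟩ : ∃ v : Fin n → ℝ, v = W *ᵥ s := ⟨_, rfl⟩
  obtain ⟨u, hudef⟩ : ∃ u : Fin (p+1) → ℝ, u = B⁻¹ *ᵥ (Fᵀ *ᵥ v) := ⟨_, rfl⟩
  obtain ⟨g, hgdef⟩ : ∃ g : Fin n → ℝ, g = F *ᵥ u := ⟨_, rfl⟩
  have hWdot : ∀ a b : Fin n → ℝ, a ⬝ᵥ W *ᵥ b = (W *ᵥ a) ⬝ᵥ b := by
    intro a b; rw [mulVec_dot, hWt]
  -- Step A : LHS = v ⬝ᵥ g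
  have stepA : s ⬝ᵥ (W * F * B⁻¹ * Fᵀ * W) *ᵥ s = v ⬝ᵥ g := by
    rw [← mulVec_mulVec, ← mulVec_mulVec, ← mulVec_mulVec, ← mulVec_mulVec,
      hWdot, ← hvdef, hgdef, hudef]
  -- Step B : g ⬝ᵥ R *ᵥ g = v ⬝ᵥ g
  have stepB : g ⬝ᵥ R *ᵥ g = v ⬝ᵥ g := by
    have h1 : g ⬝ᵥ R *ᵥ g = u ⬝ᵥ B *ᵥ u := by rw [hgdef, hBdef, hBdot]
    have h2 : B *ᵥ u = Fᵀ *ᵥ v := by rw [hudef]; exact hBcancel _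
    rw [h1, h2, ← mulVec_dot F, ← hgdef, dotProduct_comm]
  have htnn : 0 ≤ v ⬝ᵥ g := by
    rw [← stepB]
    have := hRpd.posSemidef.dotProduct_mulVec_nonneg g
    rwa [hstarv n] at this
  -- Step D : v ⬝ᵥ g ≤ v ⬝ᵥ R⁻¹ *ᵥ v  and  lammin * (v ⬝ᵥ R⁻¹ *ᵥ v) ≤ v ⬝ᵥ v
  obtain ⟨a, hadef⟩ : ∃ a : Fin n → ℝ, a = R⁻¹ *ᵥ v := ⟨_, rfl⟩
  have hva : R *ᵥ a = v := by rw [hadef, mulVec_mulVec, hRRi, one_mulVec]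
  have hq1a : v ⬝ᵥ R⁻¹ *ᵥ v = a ⬝ᵥ R *ᵥ a := by
    have h := mulVec_dot R a a
    rw [hva, hRt] at h
    rw [← hadef]
    exact h
  have hq1nn : 0 ≤ v ⬝ᵥ R⁻¹ *ᵥ v := by
    rw [hq1a]
    exact le_trans (mul_nonneg hminpos.le (dot_self_nonneg a)) (hRayL a)
  have hag : a ⬝ᵥ R *ᵥ g = v ⬝ᵥ g := by
    have h := mulVec_dot R a g
    rw [hva, hRt] at h
    exact h.symm
  have stepD : v ⬝ᵥ g ≤ v ⬝ᵥ R⁻¹ *ᵥ v := by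
    have hcs := psd_cs hRpd.posSemidef a g
    rw [hag, stepB, ← hq1a] at hcs
    rcases htnn.eq_or_lt with h0 | h0
    · rw [← h0]; exact hq1nn
    · nlinarith [hcs, h0, hq1nn]
  have stepD2 : lammin * (v ⬝ᵥ R⁻¹ *ᵥ v) ≤ v ⬝ᵥ v := by
    have hcs2 : (a ⬝ᵥ v) ^ 2 ≤ (a ⬝ᵥ a) * (v ⬝ᵥ v) := dot_cs a v
    have hav : a ⬝ᵥ v = v ⬝ᵥ R⁻¹ *ᵥ v := by
      rw [dotProduct_comm, hadef]
    rw [hav] at hcs2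
    have hlow : lammin * (a ⬝ᵥ a) ≤ v ⬝ᵥ R⁻¹ *ᵥ v := by
      rw [hq1a]; exact hRayL a
    rcases hq1nn.eq_or_lt with h0 | h0
    · rw [← h0]
      simpa using dot_self_nonneg v
    · nlinarith [hcs2, hlow, h0, dot_self_nonneg v, dot_self_nonneg a, hminpos]
  -- Step E : v ⬝ᵥ v ≤ r² (s ⬝ᵥ s)
  have stepE : v ⬝ᵥ v ≤ r ^ 2 * (s ⬝ᵥ s) := by rw [hvdef]; exact hW2 s
  -- Step F : lammin (s ⬝ᵥ s) ≤ s ⬝ᵥ R *ᵥ s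
  have stepF : lammin * (s ⬝ᵥ s) ≤ s ⬝ᵥ R *ᵥ s := hRayL s
  -- Step G : s ⬝ᵥ R *ᵥ s ≤ x ⬝ᵥ R *ᵥ x
  have stepG : s ⬝ᵥ R *ᵥ s ≤ x ⬝ᵥ R *ᵥ x := by
    obtain ⟨y, hydef⟩ : ∃ y : Fin (p+1) → ℝ, y = Fᵀ *ᵥ (R *ᵥ x) := ⟨_, rfl⟩
    obtain ⟨u', hu'def⟩ : ∃ u' : Fin (p+1) → ℝ, u' = B⁻¹ *ᵥ y := ⟨_, rfl⟩
    have hs2 : s = x - F *ᵥ u' := by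
      rw [hsdef]
      unfold sresid
      rw [← hRdef, ← hBdef, Matrix.sub_mulVec, Matrix.one_mulVec, ← mulVec_mulVec,
        ← mulVec_mulVec, ← mulVec_mulVec, ← hydef, ← hu'def]
    have hd1 : (F *ᵥ u') ⬝ᵥ R *ᵥ x = u' ⬝ᵥ y := by
      rw [mulVec_dot, hydef]
    have hd2 : x ⬝ᵥ R *ᵥ (F *ᵥ u') = u' ⬝ᵥ y := by
      have h := mulVec_dot R x (F *ᵥ u')
      rw [hRt] at h
      rw [← h, dotProduct_comm (R *ᵥ x)]
      exact hd1
    have hd3 : (F *ᵥ u') ⬝ᵥ R *ᵥ (F *ᵥ u') = u' ⬝ᵥ y := by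
      rw [← hBdot, ← hBdef]
      have h2 : B *ᵥ u' = y := by rw [hu'def]; exact hBcancel _
      rw [h2, hu'def, mulVec_dot, hBit, dotProduct_comm]
    have hynn : 0 ≤ u' ⬝ᵥ y := by
      have h1 : u' ⬝ᵥ y = y ⬝ᵥ B⁻¹ *ᵥ y := by
        rw [hu'def, mulVec_dot, hBit, dotProduct_comm]
      have h2 := hBipd.posSemidef.dotProduct_mulVec_nonneg y
      rw [hstarv (p+1)] at h2
      rw [h1]; exact h2
    have hexpand : s ⬝ᵥ R *ᵥ s = x ⬝ᵥ R *ᵥ x - u' ⬝ᵥ y := by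
      rw [hs2, Matrix.mulVec_sub, dotProduct_sub, sub_dotProduct, sub_dotProduct,
        hd1, hd2, hd3]
      ring
    linarith [hexpand, hynn]
  -- Step H : x ⬝ᵥ R *ᵥ x ≤ n * lammax
  have hxx : x ⬝ᵥ x = (n : ℝ) := by
    simp only [dotProduct]
    rw [show ∑ i, x i * x i = ∑ _i : Fin n, (1 : ℝ) from
      Finset.sum_congr rfl fun i _ => by rcases hx i with h | h <;> rw [h] <;> norm_num]
    simp
  have stepH : x ⬝ᵥ R *ᵥ x ≤ (n : ℝ) * lammax := by
    have := hRayU x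
    rw [hxx] at this
    linarith [this]
  -- Step I : x ⬝ᵥ R *ᵥ x ≤ (1+ρ₀) m
  have stepI : x ⬝ᵥ R *ᵥ x ≤ (1 + ρ₀) * ∑ i, degVec W i := by
    have hsplit : x ⬝ᵥ R *ᵥ x
        = x ⬝ᵥ (Matrix.diagonal (degVec W)) *ᵥ x - ρ₀ * (x ⬝ᵥ W *ᵥ x) := by
      rw [hRdef]
      unfold Rmat
      rw [Matrix.sub_mulVec, dotProduct_sub, Matrix.smul_mulVec, dotProduct_smul,
        smul_eq_mul]
    have hdiag : x ⬝ᵥ (Matrix.diagonal (degVec W)) *ᵥ x = ∑ i, degVec W i := by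
      simp only [dotProduct, mulVec_diagonal]
      exact Finset.sum_congr rfl fun i _ => by rcases hx i with h | h <;> rw [h] <;> ring
    have hWlow : -(∑ i, degVec W i) ≤ x ⬝ᵥ W *ᵥ x := by
      have hterm : ∀ i, -(degVec W i) ≤ x i * (W *ᵥ x) i := by
        intro i
        unfold degVec
        simp only [Matrix.mulVec, dotProduct]
        rw [Finset.mul_sum, ← Finset.sum_neg_distrib]
        refine Finset.sum_le_sum fun j _ => ?_
        rcases hW01 i j with hw | hw <;> rcases hx i with hi | hi <;>
          rcases hx j with hj | hj <;> rw [hw, hi, hj] <;> norm_num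
      calc -(∑ i, degVec W i) = ∑ i, -(degVec W i) := by rw [Finset.sum_neg_distrib]
        _ ≤ ∑ i, x i * (W *ᵥ x) i := Finset.sum_le_sum fun i _ => hterm i
        _ = x ⬝ᵥ W *ᵥ x := rfl
    have hρnn : 0 ≤ ρ₀ := hρ₀.1.le
    have := mul_le_mul_of_nonneg_left hWlow hρnn
    rw [hsplit, hdiag]
    nlinarith [this]
  -- assemble
  rw [stepA]
  have hq4M : s ⬝ᵥ R *ᵥ s ≤ min ((n : ℝ) * lammax) ((1 + ρ₀) * ∑ i, degVec W i) :=
    le_trans stepG (le_min stepH stepI)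
  rw [le_div_iff₀ (pow_pos hminpos 2)]
  have e1 : v ⬝ᵥ g * lammin ^ 2 ≤ (v ⬝ᵥ R⁻¹ *ᵥ v) * lammin ^ 2 :=
    mul_le_mul_of_nonneg_right stepD (sq_nonneg _)
  have e2 : (v ⬝ᵥ R⁻¹ *ᵥ v) * lammin ^ 2 ≤ (v ⬝ᵥ v) * lammin := by
    nlinarith [stepD2, hminpos.le]
  have e3 : (v ⬝ᵥ v) * lammin ≤ (r ^ 2 * (s ⬝ᵥ s)) * lammin :=
    mul_le_mul_of_nonneg_right stepE hminpos.le
  have e4 : r ^ 2 * (lammin * (s ⬝ᵥ s)) ≤ r ^ 2 * (s ⬝ᵥ R *ᵥ s) :=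
    mul_le_mul_of_nonneg_left stepF (sq_nonneg r)
  have e5 : r ^ 2 * (s ⬝ᵥ R *ᵥ s) ≤
      r ^ 2 * min ((n : ℝ) * lammax) ((1 + ρ₀) * ∑ i, degVec W i) :=
    mul_le_mul_of_nonneg_left hq4M (sq_nonneg r)
  nlinarith [e1, e2, e3, e4, e5]
end

section
/- Let A and B be symmetric n×n real matrices, each having at least one nonzero off-diagonal entry. Then the correlation of the random variables xᵀAx and xᵀBx equals (Σ_{i<j} A_{ij}B_{ij}) / (√(Σ_{i<j} A_{ij}²) · √(Σ_{i<j} B_{ij}²)), where the correlation of U and V is cov(U,V)/(√Var(U)·√Var(V)). -/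
open MeasureTheory ProbabilityTheory Matrix

set_option linter.unusedSectionVars false

/-- The random quadratic form `ω ↦ xᵀ M x = ∑_{i,j} M_{ij} xᵢ(ω) xⱼ(ω)`. -/
noncomputable def quadRV {Ω : Type*} {n : ℕ} (M : Matrix (Fin n) (Fin n) ℝ)
    (x : Fin n → Ω → ℝ) (ω : Ω) : ℝ :=
  ∑ i, ∑ j, M i j * x i ω * x j ω

/-- The sum over pairs `i < j` of `A_{ij} B_{ij}`. -/
noncomputable def offDiagSum {n : ℕ} (A B : Matrix (Fin n) (Fin n) ℝ) : ℝ :=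
  ∑ q ∈ Finset.univ.filter (fun q : Fin n × Fin n => q.1 < q.2), A q.1 q.2 * B q.1 q.2

section Aux
variable {Ω : Type*} [MeasurableSpace Ω] {μ : Measure Ω} [IsProbabilityMeasure μ]
  {n : ℕ} {x : Fin n → Ω → ℝ}

lemma my_ae_pm (hmeas : ∀ i, Measurable (x i))
    (hplus : ∀ i, μ {ω | x i ω = 1} = 1/2) (hminus : ∀ i, μ {ω | x i ω = -1} = 1/2)
    (i : Fin n) : ∀ᵐ ω ∂μ, x i ω = 1 ∨ x i ω = -1 := by
  have hS : MeasurableSet {ω | x i ω = 1} := (hmeas i) (measurableSet_singleton 1)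
  have hT : MeasurableSet {ω | x i ω = -1} := (hmeas i) (measurableSet_singleton (-1))
  have hdisj : Disjoint {ω | x i ω = 1} {ω | x i ω = -1} := by
    rw [Set.disjoint_left]
    intro ω h1 h2
    simp only [Set.mem_setOf_eq] at h1 h2
    rw [h1] at h2; norm_num at h2
  have hu : μ ({ω | x i ω = 1} ∪ {ω | x i ω = -1}) = 1 := by
    rw [measure_union hdisj hT, hplus, hminus]
    rw [one_div]; exact ENNReal.inv_two_add_inv_two
  have : μ ({ω | x i ω = 1} ∪ {ω | x i ω = -1})ᶜ = 0 := by
    rw [prob_compl_eq_zero_iff (hS.union hT)]; exact hu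
  filter_upwards [measure_eq_zero_iff_ae_notMem.mp this] with ω hω
  by_contra hc
  push_neg at hc
  exact hω (by simp [Set.mem_union, Set.mem_setOf_eq, hc.1, hc.2])

lemma my_ae_sq (hmeas : ∀ i, Measurable (x i))
    (hplus : ∀ i, μ {ω | x i ω = 1} = 1/2) (hminus : ∀ i, μ {ω | x i ω = -1} = 1/2)
    (i : Fin n) : ∀ᵐ ω ∂μ, x i ω * x i ω = 1 := by
  filter_upwards [my_ae_pm hmeas hplus hminus i] with ω hω
  rcases hω with h | h <;> rw [h] <;> norm_num

lemma my_int_prod (hmeas : ∀ i, Measurable (x i))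
    (hplus : ∀ i, μ {ω | x i ω = 1} = 1/2) (hminus : ∀ i, μ {ω | x i ω = -1} = 1/2)
    (s : Finset (Fin n)) : Integrable (fun ω => ∏ i ∈ s, x i ω) μ := by
  refine Integrable.mono' (integrable_const 1) ?_ ?_
  · exact (Finset.measurable_prod s (fun i _ => hmeas i)).aestronglyMeasurable
  · have : ∀ᵐ ω ∂μ, ∀ i, x i ω = 1 ∨ x i ω = -1 :=
      (ae_all_iff).mpr (my_ae_pm hmeas hplus hminus)
    filter_upwards [this] with ω hω
    rw [Real.norm_eq_abs, Finset.abs_prod]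
    calc ∏ i ∈ s, |x i ω| = ∏ i ∈ s, 1 := by
          refine Finset.prod_congr rfl fun i _ => ?_
          rcases hω i with h | h <;> rw [h] <;> norm_num
      _ = 1 := Finset.prod_const_one
    exact le_refl 1


lemma my_exp_zero (hmeas : ∀ i, Measurable (x i))
    (hplus : ∀ i, μ {ω | x i ω = 1} = 1/2) (hminus : ∀ i, μ {ω | x i ω = -1} = 1/2)
    (i : Fin n) : ∫ ω, x i ω ∂μ = 0 := by
  have hS : MeasurableSet {ω | x i ω = 1} := (hmeas i) (measurableSet_singleton 1)
  have hT : MeasurableSet {ω | x i ω = -1} := (hmeas i) (measurableSet_singleton (-1))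
  have heq : x i =ᵐ[μ] fun ω => Set.indicator {ω | x i ω = 1} (fun _ => (1:ℝ)) ω
      + Set.indicator {ω | x i ω = -1} (fun _ => (-1:ℝ)) ω := by
    filter_upwards [my_ae_pm hmeas hplus hminus i] with ω hω
    rcases hω with h | h
    · rw [Set.indicator_of_mem (by exact h), Set.indicator_of_notMem (by simp [h]; norm_num)]
      simpa using h
    · rw [Set.indicator_of_notMem (by simp [h]; norm_num), Set.indicator_of_mem (by exact h)]
      simpa using h
  rw [integral_congr_ae heq, integral_add ((integrable_const (1:ℝ)).indicator hS)
    ((integrable_const (-1:ℝ)).indicator hT), integral_indicator_const _ hS,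
    integral_indicator_const _ hT, measureReal_def, measureReal_def, hplus, hminus]
  norm_num

lemma my_int_prod_zero (hmeas : ∀ i, Measurable (x i))
    (hindep : iIndepFun x μ)
    (hplus : ∀ i, μ {ω | x i ω = 1} = 1/2) (hminus : ∀ i, μ {ω | x i ω = -1} = 1/2)
    (s : Finset (Fin n)) (hs : s.Nonempty) : ∫ ω, ∏ i ∈ s, x i ω ∂μ = 0 := by
  obtain ⟨a, ha⟩ := hs
  have hind : IndepFun (∏ j ∈ s.erase a, x j) (x a) μ :=
    hindep.indepFun_finset_prod_of_notMem hmeas (Finset.notMem_erase a s)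
  have h1 : ∀ ω, ∏ i ∈ s, x i ω = (∏ j ∈ s.erase a, x j) ω * x a ω := by
    intro ω
    rw [Finset.prod_apply]
    exact (Finset.prod_erase_mul s _ ha).symm
  simp_rw [h1]
  have hm2 : AEStronglyMeasurable (∏ j ∈ s.erase a, x j) μ := by
    have : (∏ j ∈ s.erase a, x j) = fun ω => ∏ j ∈ s.erase a, x j ω := by
      funext ω; exact Finset.prod_apply ω _ _
    rw [this]
    exact (Finset.measurable_prod _ (fun i _ => hmeas i)).aestronglyMeasurable
  rw [hind.integral_fun_mul_eq_mul_integral hm2 (hmeas a).aestronglyMeasurable,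
    my_exp_zero hmeas hplus hminus a, mul_zero]


lemma my_exp_mul (hmeas : ∀ i, Measurable (x i))
    (hindep : iIndepFun x μ)
    (hplus : ∀ i, μ {ω | x i ω = 1} = 1/2) (hminus : ∀ i, μ {ω | x i ω = -1} = 1/2)
    {i j : Fin n} (hij : i ≠ j) : ∫ ω, x i ω * x j ω ∂μ = 0 := by
  have h := my_int_prod_zero hmeas hindep hplus hminus {i, j} ⟨i, by simp⟩
  simpa [Finset.prod_pair hij] using h

lemma my_exp4 (hmeas : ∀ i, Measurable (x i))
    (hindep : iIndepFun x μ)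
    (hplus : ∀ i, μ {ω | x i ω = 1} = 1/2) (hminus : ∀ i, μ {ω | x i ω = -1} = 1/2)
    {i j k l : Fin n} (hij : i ≠ j) (hik : i ≠ k) (hil : i ≠ l) (hjk : j ≠ k)
    (hjl : j ≠ l) (hkl : k ≠ l) :
    ∫ ω, x i ω * x j ω * (x k ω * x l ω) ∂μ = 0 := by
  have h := my_int_prod_zero hmeas hindep hplus hminus {i, j, k, l} ⟨i, by simp⟩
  simp only [Finset.prod_insert (by simp [hij, hik, hil] : i ∉ ({j, k, l} : Finset (Fin n))),
    Finset.prod_insert (by simp [hjk, hjl] : j ∉ ({k, l} : Finset (Fin n))),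
    Finset.prod_pair hkl] at h
  simpa [mul_assoc] using h

lemma my_exp_pair (hmeas : ∀ i, Measurable (x i))
    (hindep : iIndepFun x μ)
    (hplus : ∀ i, μ {ω | x i ω = 1} = 1/2) (hminus : ∀ i, μ {ω | x i ω = -1} = 1/2)
    (p q : Fin n × Fin n) (hp : p.1 < p.2) (hq : q.1 < q.2) :
    ∫ ω, x p.1 ω * x p.2 ω * (x q.1 ω * x q.2 ω) ∂μ = if p = q then 1 else 0 := by
  have hsq : ∀ᵐ ω ∂μ, ∀ i, x i ω * x i ω = 1 :=
    (ae_all_iff).mpr (my_ae_sq hmeas hplus hminus)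
  obtain ⟨a, b⟩ := p
  obtain ⟨c, d⟩ := q
  simp only at hp hq
  by_cases hpq : ((a, b) : Fin n × Fin n) = (c, d)
  · rw [if_pos hpq]
    obtain ⟨rfl, rfl⟩ := Prod.mk.injEq .. ▸ hpq
    have heq : (fun ω => x a ω * x b ω * (x a ω * x b ω)) =ᵐ[μ] fun _ => (1:ℝ) := by
      filter_upwards [hsq] with ω hω
      have h1 := hω a; have h2 := hω b
      nlinarith [h1, h2]
    rw [integral_congr_ae heq]
    simp
  · rw [if_neg hpq]
    have hab : a ≠ b := ne_of_lt hp
    have hcd : c ≠ d := ne_of_lt hq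
    by_cases hac : a = c
    · subst hac
      have hbd : b ≠ d := fun h => hpq (by rw [h])
      have heq : (fun ω => x a ω * x b ω * (x a ω * x d ω)) =ᵐ[μ]
          fun ω => x b ω * x d ω := by
        filter_upwards [hsq] with ω hω
        have h1 := hω a
        linear_combination x b ω * x d ω * h1
      rw [integral_congr_ae heq]
      exact my_exp_mul hmeas hindep hplus hminus hbd
    · by_cases had : a = d
      · subst had
        have hbc : b ≠ c := fun h => absurd (hq.trans hp) (by rw [h]; exact lt_irrefl _)
        have heq : (fun ω => x a ω * x b ω * (x c ω * x a ω)) =ᵐ[μ]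
            fun ω => x b ω * x c ω := by
          filter_upwards [hsq] with ω hω
          have h1 := hω a
          linear_combination x b ω * x c ω * h1
        rw [integral_congr_ae heq]
        exact my_exp_mul hmeas hindep hplus hminus hbc
      · by_cases hbc : b = c
        · subst hbc
          have had2 : a ≠ d := ne_of_lt (hp.trans hq)
          have heq : (fun ω => x a ω * x b ω * (x b ω * x d ω)) =ᵐ[μ]
              fun ω => x a ω * x d ω := by
            filter_upwards [hsq] with ω hω
            have h1 := hω b
            linear_combination x a ω * x d ω * h1
          rw [integral_congr_ae heq]
          exact my_exp_mul hmeas hindep hplus hminus had2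
        · by_cases hbd : b = d
          · subst hbd
            have hac2 : a ≠ c := hac
            have heq : (fun ω => x a ω * x b ω * (x c ω * x b ω)) =ᵐ[μ]
                fun ω => x a ω * x c ω := by
              filter_upwards [hsq] with ω hω
              have h1 := hω b
              linear_combination x a ω * x c ω * h1
            rw [integral_congr_ae heq]
            exact my_exp_mul hmeas hindep hplus hminus hac2
          · exact my_exp4 hmeas hindep hplus hminus hab hac had hbc hbd hcd


lemma my_int2 (hmeas : ∀ i, Measurable (x i))
    (hplus : ∀ i, μ {ω | x i ω = 1} = 1/2) (hminus : ∀ i, μ {ω | x i ω = -1} = 1/2)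
    (i j : Fin n) : Integrable (fun ω => x i ω * x j ω) μ := by
  refine Integrable.mono' (integrable_const 1) ((hmeas i).mul (hmeas j)).aestronglyMeasurable ?_
  filter_upwards [my_ae_pm hmeas hplus hminus i, my_ae_pm hmeas hplus hminus j] with ω h1 h2
  rw [Real.norm_eq_abs, abs_mul]
  rcases h1 with h | h <;> rcases h2 with h' | h' <;> rw [h, h'] <;> norm_num

lemma my_int4 (hmeas : ∀ i, Measurable (x i))
    (hplus : ∀ i, μ {ω | x i ω = 1} = 1/2) (hminus : ∀ i, μ {ω | x i ω = -1} = 1/2)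
    (i j k l : Fin n) : Integrable (fun ω => x i ω * x j ω * (x k ω * x l ω)) μ := by
  refine Integrable.mono' (integrable_const 1)
    ((((hmeas i).mul (hmeas j)).mul ((hmeas k).mul (hmeas l))).aestronglyMeasurable) ?_
  filter_upwards [my_ae_pm hmeas hplus hminus i, my_ae_pm hmeas hplus hminus j,
    my_ae_pm hmeas hplus hminus k, my_ae_pm hmeas hplus hminus l] with ω h1 h2 h3 h4
  rw [Real.norm_eq_abs]
  rcases h1 with h | h <;> rcases h2 with h' | h' <;> rcases h3 with h'' | h'' <;>
    rcases h4 with h''' | h''' <;> rw [h, h', h'', h'''] <;> norm_num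

lemma my_decomp {M : Matrix (Fin n) (Fin n) ℝ} (hM : M.IsSymm) (ω : Ω)
    (hω : ∀ i, x i ω * x i ω = 1) :
    quadRV M x ω = (∑ i, M i i) +
      ∑ q ∈ Finset.univ.filter (fun q : Fin n × Fin n => q.1 < q.2),
        2 * M q.1 q.2 * (x q.1 ω * x q.2 ω) := by
  classical
  unfold quadRV
  have h0 : ∑ i, ∑ j, M i j * x i ω * x j ω
      = ∑ q ∈ (Finset.univ : Finset (Fin n × Fin n)), M q.1 q.2 * x q.1 ω * x q.2 ω := by
    rw [← Finset.univ_product_univ, Finset.sum_product]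
  rw [h0, ← Finset.sum_filter_add_sum_filter_not Finset.univ (fun q : Fin n × Fin n => q.1 < q.2)]
  have h1 : ∑ q ∈ Finset.univ.filter (fun q : Fin n × Fin n => ¬ q.1 < q.2),
      M q.1 q.2 * x q.1 ω * x q.2 ω
      = (∑ q ∈ Finset.univ.filter (fun q : Fin n × Fin n => q.1 = q.2),
          M q.1 q.2 * x q.1 ω * x q.2 ω)
        + ∑ q ∈ Finset.univ.filter (fun q : Fin n × Fin n => q.2 < q.1),
          M q.1 q.2 * x q.1 ω * x q.2 ω := by
    rw [← Finset.sum_filter_add_sum_filter_not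
      (Finset.univ.filter (fun q : Fin n × Fin n => ¬ q.1 < q.2))
      (fun q : Fin n × Fin n => q.1 = q.2)]
    congr 1
    · congr 1
      rw [Finset.filter_filter]
      ext q
      simp only [Finset.mem_filter, Finset.mem_univ, true_and, Fin.lt_def, Fin.ext_iff]
      omega
    · congr 1
      rw [Finset.filter_filter]
      ext q
      simp only [Finset.mem_filter, Finset.mem_univ, true_and, Fin.lt_def, Fin.ext_iff]
      omega
  rw [h1]
  have hdiag : ∑ q ∈ Finset.univ.filter (fun q : Fin n × Fin n => q.1 = q.2),
      M q.1 q.2 * x q.1 ω * x q.2 ω = ∑ i, M i i := by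
    refine Finset.sum_nbij' Prod.fst (fun i => (i, i)) ?_ ?_ ?_ ?_ ?_
    · intro q _; exact Finset.mem_univ _
    · intro i _; simp
    · intro q hq
      simp only [Finset.mem_filter, Finset.mem_univ, true_and] at hq
      exact Prod.ext rfl hq
    · intro i _; rfl
    · intro q hq
      simp only [Finset.mem_filter, Finset.mem_univ, true_and] at hq
      obtain ⟨a, b⟩ := q
      obtain rfl : a = b := hq
      dsimp only
      rw [mul_assoc, hω a, mul_one]
  have hgt : ∑ q ∈ Finset.univ.filter (fun q : Fin n × Fin n => q.2 < q.1),
      M q.1 q.2 * x q.1 ω * x q.2 ω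
      = ∑ q ∈ Finset.univ.filter (fun q : Fin n × Fin n => q.1 < q.2),
        M q.1 q.2 * x q.1 ω * x q.2 ω := by
    refine Finset.sum_nbij' Prod.swap Prod.swap ?_ ?_ ?_ ?_ ?_
    · intro q hq
      simp only [Finset.mem_filter, Finset.mem_univ, true_and, Prod.fst_swap,
        Prod.snd_swap] at *
      exact hq
    · intro q hq
      simp only [Finset.mem_filter, Finset.mem_univ, true_and, Prod.fst_swap,
        Prod.snd_swap] at *
      exact hq
    · intro q _; exact Prod.swap_swap q
    · intro q _; exact Prod.swap_swap q
    · intro q hq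
      have hsym : M q.1 q.2 = M q.2 q.1 := (hM.apply q.1 q.2).symm
      simp only [Prod.fst_swap, Prod.snd_swap]
      rw [hsym]; ring
  rw [hdiag, hgt,
    show ∑ q ∈ Finset.univ.filter (fun q : Fin n × Fin n => q.1 < q.2),
        2 * M q.1 q.2 * (x q.1 ω * x q.2 ω)
      = ∑ q ∈ Finset.univ.filter (fun q : Fin n × Fin n => q.1 < q.2),
        (M q.1 q.2 * x q.1 ω * x q.2 ω + M q.1 q.2 * x q.1 ω * x q.2 ω)
      from Finset.sum_congr rfl (fun q _ => by ring), Finset.sum_add_distrib]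
  ring


lemma my_int_Z (hmeas : ∀ i, Measurable (x i))
    (hplus : ∀ i, μ {ω | x i ω = 1} = 1/2) (hminus : ∀ i, μ {ω | x i ω = -1} = 1/2)
    (M : Matrix (Fin n) (Fin n) ℝ) :
    Integrable (fun ω => ∑ q ∈ Finset.univ.filter (fun q : Fin n × Fin n => q.1 < q.2),
      2 * M q.1 q.2 * (x q.1 ω * x q.2 ω)) μ :=
  integrable_finset_sum _ (fun q _ => (my_int2 hmeas hplus hminus q.1 q.2).const_mul _)

lemma my_exp_Z (hmeas : ∀ i, Measurable (x i))
    (hindep : iIndepFun x μ)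
    (hplus : ∀ i, μ {ω | x i ω = 1} = 1/2) (hminus : ∀ i, μ {ω | x i ω = -1} = 1/2)
    (M : Matrix (Fin n) (Fin n) ℝ) :
    ∫ ω, ∑ q ∈ Finset.univ.filter (fun q : Fin n × Fin n => q.1 < q.2),
      2 * M q.1 q.2 * (x q.1 ω * x q.2 ω) ∂μ = 0 := by
  rw [integral_finset_sum _ (fun q _ => (my_int2 hmeas hplus hminus q.1 q.2).const_mul _)]
  refine Finset.sum_eq_zero fun q hq => ?_
  have hne : q.1 ≠ q.2 := by
    simp only [Finset.mem_filter, Finset.mem_univ, true_and] at hq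
    exact ne_of_lt hq
  rw [integral_const_mul, my_exp_mul hmeas hindep hplus hminus hne, mul_zero]

lemma my_ZZ_eq (M N : Matrix (Fin n) (Fin n) ℝ) (ω : Ω) :
    (∑ p ∈ Finset.univ.filter (fun q : Fin n × Fin n => q.1 < q.2),
        2 * M p.1 p.2 * (x p.1 ω * x p.2 ω)) *
      (∑ q ∈ Finset.univ.filter (fun q : Fin n × Fin n => q.1 < q.2),
        2 * N q.1 q.2 * (x q.1 ω * x q.2 ω))
    = ∑ p ∈ Finset.univ.filter (fun q : Fin n × Fin n => q.1 < q.2),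
        ∑ q ∈ Finset.univ.filter (fun q : Fin n × Fin n => q.1 < q.2),
          (4 * M p.1 p.2 * N q.1 q.2) * (x p.1 ω * x p.2 ω * (x q.1 ω * x q.2 ω)) := by
  rw [Finset.sum_mul_sum]
  exact Finset.sum_congr rfl fun p _ => Finset.sum_congr rfl fun q _ => by ring

lemma my_int_ZZ (hmeas : ∀ i, Measurable (x i))
    (hplus : ∀ i, μ {ω | x i ω = 1} = 1/2) (hminus : ∀ i, μ {ω | x i ω = -1} = 1/2)
    (M N : Matrix (Fin n) (Fin n) ℝ) :
    Integrable (fun ω =>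
      (∑ p ∈ Finset.univ.filter (fun q : Fin n × Fin n => q.1 < q.2),
        2 * M p.1 p.2 * (x p.1 ω * x p.2 ω)) *
      (∑ q ∈ Finset.univ.filter (fun q : Fin n × Fin n => q.1 < q.2),
        2 * N q.1 q.2 * (x q.1 ω * x q.2 ω))) μ := by
  simp_rw [my_ZZ_eq M N]
  exact integrable_finset_sum _ (fun p _ => integrable_finset_sum _
    (fun q _ => (my_int4 hmeas hplus hminus p.1 p.2 q.1 q.2).const_mul _))

lemma my_exp_ZZ (hmeas : ∀ i, Measurable (x i))
    (hindep : iIndepFun x μ)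
    (hplus : ∀ i, μ {ω | x i ω = 1} = 1/2) (hminus : ∀ i, μ {ω | x i ω = -1} = 1/2)
    (M N : Matrix (Fin n) (Fin n) ℝ) :
    ∫ ω, (∑ p ∈ Finset.univ.filter (fun q : Fin n × Fin n => q.1 < q.2),
        2 * M p.1 p.2 * (x p.1 ω * x p.2 ω)) *
      (∑ q ∈ Finset.univ.filter (fun q : Fin n × Fin n => q.1 < q.2),
        2 * N q.1 q.2 * (x q.1 ω * x q.2 ω)) ∂μ = 4 * offDiagSum M N := by
  simp_rw [my_ZZ_eq M N]
  rw [integral_finset_sum _ (fun p _ => integrable_finset_sum _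
    (fun q _ => (my_int4 hmeas hplus hminus p.1 p.2 q.1 q.2).const_mul _))]
  have hterm : ∀ p ∈ Finset.univ.filter (fun q : Fin n × Fin n => q.1 < q.2),
      (∫ ω, ∑ q ∈ Finset.univ.filter (fun q : Fin n × Fin n => q.1 < q.2),
        (4 * M p.1 p.2 * N q.1 q.2) * (x p.1 ω * x p.2 ω * (x q.1 ω * x q.2 ω)) ∂μ)
      = 4 * (M p.1 p.2 * N p.1 p.2) := by
    intro p hpmem
    have hp : p.1 < p.2 := by
      simpa only [Finset.mem_filter, Finset.mem_univ, true_and] using hpmem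
    rw [integral_finset_sum _
      (fun q _ => (my_int4 hmeas hplus hminus p.1 p.2 q.1 q.2).const_mul _)]
    have hcalc : ∀ q ∈ Finset.univ.filter (fun q : Fin n × Fin n => q.1 < q.2),
        ∫ ω, (4 * M p.1 p.2 * N q.1 q.2) * (x p.1 ω * x p.2 ω * (x q.1 ω * x q.2 ω)) ∂μ
        = (4 * M p.1 p.2 * N q.1 q.2) * (if p = q then 1 else 0) := by
      intro q hq
      simp only [Finset.mem_filter, Finset.mem_univ, true_and] at hq
      rw [integral_const_mul, my_exp_pair hmeas hindep hplus hminus p q hp hq]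
    rw [Finset.sum_congr rfl hcalc, Finset.sum_eq_single p]
    · rw [if_pos rfl]; ring
    · intro q _ hqp
      rw [if_neg (fun h => hqp h.symm), mul_zero]
    · intro hp'
      exact absurd hpmem hp'
  rw [Finset.sum_congr rfl hterm, offDiagSum, Finset.mul_sum]

lemma my_exp_quad (hmeas : ∀ i, Measurable (x i))
    (hindep : iIndepFun x μ)
    (hplus : ∀ i, μ {ω | x i ω = 1} = 1/2) (hminus : ∀ i, μ {ω | x i ω = -1} = 1/2)
    {M : Matrix (Fin n) (Fin n) ℝ} (hM : M.IsSymm) :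
    ∫ ω, quadRV M x ω ∂μ = ∑ i, M i i := by
  have hsq : ∀ᵐ ω ∂μ, ∀ i, x i ω * x i ω = 1 :=
    (ae_all_iff).mpr (my_ae_sq hmeas hplus hminus)
  have hae : (fun ω => quadRV M x ω) =ᵐ[μ] fun ω => (∑ i, M i i) +
      ∑ q ∈ Finset.univ.filter (fun q : Fin n × Fin n => q.1 < q.2),
        2 * M q.1 q.2 * (x q.1 ω * x q.2 ω) := by
    filter_upwards [hsq] with ω hω
    exact my_decomp hM ω hω
  rw [integral_congr_ae hae, integral_add (integrable_const _)
    (my_int_Z hmeas hplus hminus M), my_exp_Z hmeas hindep hplus hminus M,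
    integral_const]
  simp

lemma my_exp_quad_mul (hmeas : ∀ i, Measurable (x i))
    (hindep : iIndepFun x μ)
    (hplus : ∀ i, μ {ω | x i ω = 1} = 1/2) (hminus : ∀ i, μ {ω | x i ω = -1} = 1/2)
    {M N : Matrix (Fin n) (Fin n) ℝ} (hM : M.IsSymm) (hN : N.IsSymm) :
    ∫ ω, quadRV M x ω * quadRV N x ω ∂μ
      = (∑ i, M i i) * (∑ i, N i i) + 4 * offDiagSum M N := by
  have hsq : ∀ᵐ ω ∂μ, ∀ i, x i ω * x i ω = 1 :=
    (ae_all_iff).mpr (my_ae_sq hmeas hplus hminus)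
  set cM := ∑ i, M i i with hcM
  set cN := ∑ i, N i i with hcN
  set ZM := fun ω => ∑ q ∈ Finset.univ.filter (fun q : Fin n × Fin n => q.1 < q.2),
    2 * M q.1 q.2 * (x q.1 ω * x q.2 ω) with hZM
  set ZN := fun ω => ∑ q ∈ Finset.univ.filter (fun q : Fin n × Fin n => q.1 < q.2),
    2 * N q.1 q.2 * (x q.1 ω * x q.2 ω) with hZN
  have hae : (fun ω => quadRV M x ω * quadRV N x ω) =ᵐ[μ]
      fun ω => cM * cN + (cM * ZN ω + (cN * ZM ω + ZM ω * ZN ω)) := by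
    filter_upwards [hsq] with ω hω
    rw [my_decomp hM ω hω, my_decomp hN ω hω]
    ring
  have I2 : Integrable (fun ω => cM * ZN ω) μ :=
    (my_int_Z hmeas hplus hminus N).const_mul cM
  have I3 : Integrable (fun ω => cN * ZM ω) μ :=
    (my_int_Z hmeas hplus hminus M).const_mul cN
  have I4 : Integrable (fun ω => ZM ω * ZN ω) μ := my_int_ZZ hmeas hplus hminus M N
  have EZM : ∫ ω, ZM ω ∂μ = 0 := my_exp_Z hmeas hindep hplus hminus M
  have EZN : ∫ ω, ZN ω ∂μ = 0 := my_exp_Z hmeas hindep hplus hminus N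
  have EZZ : ∫ ω, ZM ω * ZN ω ∂μ = 4 * offDiagSum M N :=
    my_exp_ZZ hmeas hindep hplus hminus M N
  have I34 : Integrable (fun ω => cN * ZM ω + ZM ω * ZN ω) μ := I3.add I4
  have I234 : Integrable (fun ω => cM * ZN ω + (cN * ZM ω + ZM ω * ZN ω)) μ := I2.add I34
  rw [integral_congr_ae hae, integral_add (integrable_const (cM * cN)) I234,
    integral_add I2 I34, integral_add I3 I4]
  simp only [integral_const_mul, EZM, EZN, EZZ, integral_const, measure_univ,
    ENNReal.toReal_one, probReal_univ, smul_eq_mul, one_mul, mul_zero, add_zero, zero_add]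

end Aux

/-- the correlation of `xᵀAx` and `xᵀBx` equals
`(∑_{i<j} A_{ij}B_{ij}) / (√(∑_{i<j} A_{ij}²)·√(∑_{i<j} B_{ij}²))`, for symmetric `A`, `B`
each having a nonzero off-diagonal entry. -/
theorem correlation_quadratic_forms {Ω : Type*} [MeasurableSpace Ω]
    (μ : Measure Ω) [IsProbabilityMeasure μ]
    {n : ℕ} (x : Fin n → Ω → ℝ) (hmeas : ∀ i, Measurable (x i))
    (hindep : iIndepFun x μ)
    (hplus : ∀ i, μ {ω | x i ω = 1} = 1/2) (hminus : ∀ i, μ {ω | x i ω = -1} = 1/2)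
    (A B : Matrix (Fin n) (Fin n) ℝ) (hA : A.IsSymm) (hB : B.IsSymm)
    (hAne : ∃ i j, i ≠ j ∧ A i j ≠ 0) (hBne : ∃ i j, i ≠ j ∧ B i j ≠ 0) :
    ((∫ ω, quadRV A x ω * quadRV B x ω ∂μ) -
        (∫ ω, quadRV A x ω ∂μ) * ∫ ω, quadRV B x ω ∂μ) /
      (Real.sqrt ((∫ ω, quadRV A x ω * quadRV A x ω ∂μ) -
          (∫ ω, quadRV A x ω ∂μ) * ∫ ω, quadRV A x ω ∂μ) *
        Real.sqrt ((∫ ω, quadRV B x ω * quadRV B x ω ∂μ) -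
          (∫ ω, quadRV B x ω ∂μ) * ∫ ω, quadRV B x ω ∂μ)) =
    offDiagSum A B / (Real.sqrt (offDiagSum A A) * Real.sqrt (offDiagSum B B)) := by
  rw [my_exp_quad hmeas hindep hplus hminus hA, my_exp_quad hmeas hindep hplus hminus hB,
    my_exp_quad_mul hmeas hindep hplus hminus hA hB,
    my_exp_quad_mul hmeas hindep hplus hminus hA hA,
    my_exp_quad_mul hmeas hindep hplus hminus hB hB,
    add_sub_cancel_left, add_sub_cancel_left, add_sub_cancel_left]
  have hs4 : ∀ s : ℝ, 0 ≤ s → Real.sqrt (4 * s) = 2 * Real.sqrt s := by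
    intro s hs
    rw [Real.sqrt_mul (by norm_num) s,
      show (4:ℝ) = 2^2 by norm_num, Real.sqrt_sq (by norm_num : (0:ℝ) ≤ 2)]
  have hSAA : 0 ≤ offDiagSum A A :=
    Finset.sum_nonneg (fun q _ => mul_self_nonneg _)
  have hSBB : 0 ≤ offDiagSum B B :=
    Finset.sum_nonneg (fun q _ => mul_self_nonneg _)
  rw [hs4 _ hSAA, hs4 _ hSBB,
    show 2 * Real.sqrt (offDiagSum A A) * (2 * Real.sqrt (offDiagSum B B))
      = 4 * (Real.sqrt (offDiagSum A A) * Real.sqrt (offDiagSum B B)) by ring,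
    mul_div_mul_left _ _ (by norm_num : (4:ℝ) ≠ 0)]
end

section
/- Let n ≥ 3 be odd, let 0 ≤ ρ < 1, assume every node has degree mᵢ ≥ 1 and F has full column rank, and let x be uniformly distributed on {x ∈ {−1,1}ⁿ : Σᵢ xᵢ ∈ {−1,1}}. Then E[xᵀK(ρ)x] = tr(K(ρ)·C), where C is the n×n matrix with all diagonal entries equal to 1 and all off-diagonal entries equal to −1/n. -/
open Matrix

/-- The finite set of sign vectors `{-1,1}ⁿ` (as real vectors). -/
noncomputable def signVecs (n : ℕ) : Finset (Fin n → ℝ) := by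
  classical
  exact (Finset.univ : Finset (Fin n → Bool)).image (fun b i => if b i then 1 else -1)

/-- Balanced sign vectors: `∑ᵢ xᵢ = 0`. -/
noncomputable def balancedVecs (n : ℕ) : Finset (Fin n → ℝ) := by
  classical
  exact (signVecs n).filter (fun v => ∑ i, v i = 0)

/-- Near-balanced sign vectors: `∑ᵢ xᵢ ∈ {-1,1}`. -/
noncomputable def nearBalancedVecs (n : ℕ) : Finset (Fin n → ℝ) := by
  classical
  exact (signVecs n).filter (fun v => ∑ i, v i = 1 ∨ ∑ i, v i = -1)

lemma mem_signVecs {n : ℕ} {v : Fin n → ℝ} :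
    v ∈ signVecs n ↔ ∀ i, v i = 1 ∨ v i = -1 := by
  classical
  constructor
  · rintro h i
    simp only [signVecs, Finset.mem_image] at h
    obtain ⟨b, -, rfl⟩ := h
    by_cases hb : b i <;> simp [hb]
  · intro h
    simp only [signVecs, Finset.mem_image]
    refine ⟨fun i => decide (v i = 1), Finset.mem_univ _, ?_⟩
    funext i
    rcases h i with h1 | h1 <;> simp [h1] <;> norm_num

lemma mem_nearBalanced {n : ℕ} {v : Fin n → ℝ} :
    v ∈ nearBalancedVecs n ↔ v ∈ signVecs n ∧ (∑ i, v i = 1 ∨ ∑ i, v i = -1) := by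
  simp [nearBalancedVecs]

lemma comp_perm_mem {n : ℕ} (σ : Equiv.Perm (Fin n)) {v : Fin n → ℝ}
    (h : v ∈ nearBalancedVecs n) : (v ∘ σ) ∈ nearBalancedVecs n := by
  rw [mem_nearBalanced] at h ⊢
  refine ⟨mem_signVecs.2 fun i => mem_signVecs.1 h.1 (σ i), ?_⟩
  have : ∑ i, v (σ i) = ∑ i, v i := Equiv.sum_comp σ v
  simpa [Function.comp, this] using h.2

lemma sum_comp_perm {n : ℕ} (σ : Equiv.Perm (Fin n)) (f : (Fin n → ℝ) → ℝ) :
    ∑ v ∈ nearBalancedVecs n, f (v ∘ σ) = ∑ v ∈ nearBalancedVecs n, f v := by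
  classical
  refine Finset.sum_nbij' (fun v => v ∘ σ) (fun v => v ∘ σ.symm) ?_ ?_ ?_ ?_ ?_
  · intro v hv; exact comp_perm_mem σ hv
  · intro v hv; exact comp_perm_mem σ.symm hv
  · intro v hv; funext i; simp
  · intro v hv; funext i; simp
  · intro v hv; rfl

lemma t_perm {n : ℕ} (σ : Equiv.Perm (Fin n)) (i j : Fin n) :
    ∑ v ∈ nearBalancedVecs n, v (σ i) * v (σ j)
      = ∑ v ∈ nearBalancedVecs n, v i * v j := by
  exact sum_comp_perm σ (fun v => v i * v j)

lemma exists_perm {n : ℕ} {i j i' j' : Fin n} (hij : i ≠ j) (hij' : i' ≠ j') :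
    ∃ σ : Equiv.Perm (Fin n), σ i = i' ∧ σ j = j' := by
  classical
  set σ1 := Equiv.swap i i' with hσ1
  set σ2 := Equiv.swap (σ1 j) j' with hσ2
  have h1 : σ1 i = i' := Equiv.swap_apply_left _ _
  have hne : i' ≠ σ1 j := by
    rw [← h1]; exact fun h => hij (σ1.injective h)
  refine ⟨σ1.trans σ2, ?_, ?_⟩
  · show σ2 (σ1 i) = i'
    rw [h1, hσ2]
    exact Equiv.swap_apply_of_ne_of_ne hne hij'
  · exact Equiv.swap_apply_left _ _

lemma nearBalanced_nonempty {n : ℕ} (hodd : Odd n) : (nearBalancedVecs n).Nonempty := by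
  classical
  refine ⟨fun i => (-1 : ℝ) ^ (i : ℕ), ?_⟩
  rw [mem_nearBalanced]
  constructor
  · rw [mem_signVecs]
    intro i
    rcases Nat.even_or_odd (i : ℕ) with h | h
    · left; exact h.neg_one_pow
    · right; exact h.neg_one_pow
  · left
    rw [Fin.sum_univ_eq_sum_range (fun k => (-1 : ℝ) ^ k) n, neg_one_geom_sum]
    simp [Nat.not_even_iff_odd.2 hodd]

lemma key_expectation {n : ℕ} (hn : 3 ≤ n) (hodd : Odd n) (A : Matrix (Fin n) (Fin n) ℝ) :
    (∑ v ∈ nearBalancedVecs n, v ⬝ᵥ A.mulVec v) / ((nearBalancedVecs n).card : ℝ)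
      = (A * Matrix.of fun i j => if i = j then (1 : ℝ) else -1 / (n : ℝ)).trace := by
  classical
  set N := nearBalancedVecs n with hN
  set c := ((N.card : ℝ)) with hcdef
  have hc : 0 < c := by
    have h := Finset.card_pos.2 (nearBalanced_nonempty hodd)
    rw [hcdef, ← hN] at *
    exact_mod_cast h
  have hn0 : (0 : ℝ) < (n : ℝ) := by
    have : 0 < n := by omega
    exact_mod_cast this
  have hn1 : (n : ℝ) - 1 ≠ 0 := by
    have : (1 : ℝ) < (n : ℝ) := by exact_mod_cast (by omega : 1 < n)
    linarith
  -- squares are 1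
  have hsq : ∀ v ∈ N, ∀ i, v i * v i = 1 := by
    intro v hv i
    rcases mem_signVecs.1 (mem_nearBalanced.1 hv).1 i with h | h <;> rw [h] <;> norm_num
  -- diagonal sums
  have hdiag : ∀ i : Fin n, ∑ v ∈ N, v i * v i = c := by
    intro i
    rw [Finset.sum_congr rfl (fun v hv => hsq v hv i)]
    simp [hcdef]
  -- fixed off-diagonal indices
  have h01 : (⟨0, by omega⟩ : Fin n) ≠ ⟨1, by omega⟩ := by
    intro h; exact absurd (congrArg Fin.val h) (by simp)
  set t0 := ∑ v ∈ N, v ⟨0, by omega⟩ * v ⟨1, by omega⟩ with ht0def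
  have hoff : ∀ i j : Fin n, i ≠ j → ∑ v ∈ N, v i * v j = t0 := by
    intro i j hij
    obtain ⟨σ, h1, h2⟩ := exists_perm h01 hij
    rw [ht0def, ← h1, ← h2]
    exact t_perm σ ⟨0, by omega⟩ ⟨1, by omega⟩
  -- the counting identity
  have hS : ∑ v ∈ N, (∑ i, v i) * (∑ j, v j) = c := by
    have : ∀ v ∈ N, (∑ i, v i) * (∑ j, v j) = 1 := by
      intro v hv
      rcases (mem_nearBalanced.1 hv).2 with h | h <;> rw [h] <;> norm_num
    rw [Finset.sum_congr rfl this]; simp [hcdef]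
  have hexp : ∑ v ∈ N, (∑ i, v i) * (∑ j, v j)
      = ∑ i : Fin n, ∑ j : Fin n, ∑ v ∈ N, v i * v j := by
    rw [Finset.sum_congr rfl (fun v _ => Finset.sum_mul_sum Finset.univ Finset.univ v v)]
    rw [Finset.sum_comm]
    exact Finset.sum_congr rfl fun i _ => Finset.sum_comm
  have hdouble : ∑ i : Fin n, ∑ j : Fin n, ∑ v ∈ N, v i * v j
      = (n : ℝ) * ((n : ℝ) * t0 + (c - t0)) := by
    have hrow : ∀ i : Fin n, ∑ j : Fin n, ∑ v ∈ N, v i * v j = (n : ℝ) * t0 + (c - t0) := by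
      intro i
      have : ∀ j : Fin n, ∑ v ∈ N, v i * v j
          = t0 + (if i = j then c - t0 else 0) := by
        intro j
        by_cases h : i = j
        · subst h; rw [if_pos rfl, hdiag]; ring
        · rw [if_neg h, hoff i j h]; ring
      rw [Finset.sum_congr rfl (fun j _ => this j), Finset.sum_add_distrib,
        Finset.sum_const, Finset.sum_ite_eq Finset.univ i (fun _ => c - t0)]
      simp [mul_comm]
    rw [Finset.sum_congr rfl (fun i _ => hrow i), Finset.sum_const]
    simp only [Finset.card_univ, Fintype.card_fin, nsmul_eq_mul]
  have heq : c = (n : ℝ) * ((n : ℝ) * t0 + (c - t0)) := by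
    rw [← hdouble, ← hexp, hS]
  have ht0 : t0 = -c / (n : ℝ) := by
    have h2 : (t0 * (n : ℝ) + c) * ((n : ℝ) - 1) = 0 := by nlinarith [heq]
    rcases mul_eq_zero.1 h2 with h | h
    · field_simp
      linarith
    · exact absurd h hn1
  -- expand the quadratic form
  have hquad : ∀ v : Fin n → ℝ, v ⬝ᵥ A.mulVec v = ∑ i, ∑ j, A i j * (v i * v j) := by
    intro v
    simp only [dotProduct, Matrix.mulVec, Finset.mul_sum]
    exact Finset.sum_congr rfl fun i _ => Finset.sum_congr rfl fun j _ => by ring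
  have hnum : ∑ v ∈ N, v ⬝ᵥ A.mulVec v
      = ∑ i : Fin n, ∑ j : Fin n, A i j * (if i = j then c else -c / (n : ℝ)) := by
    rw [Finset.sum_congr rfl (fun v _ => hquad v), Finset.sum_comm]
    refine Finset.sum_congr rfl fun i _ => ?_
    rw [Finset.sum_comm]
    refine Finset.sum_congr rfl fun j _ => ?_
    rw [← Finset.mul_sum]
    by_cases h : i = j
    · subst h; rw [if_pos rfl, hdiag]
    · rw [if_neg h, hoff i j h, ht0]
  have htr : (A * Matrix.of fun i j => if i = j then (1 : ℝ) else -1 / (n : ℝ)).trace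
      = ∑ i : Fin n, ∑ j : Fin n, A i j * (if j = i then 1 else -1 / (n : ℝ)) := by
    simp [Matrix.trace, Matrix.mul_apply, Matrix.diag]
  rw [hnum, htr, div_eq_iff hc.ne', Finset.sum_mul]
  refine Finset.sum_congr rfl fun i _ => ?_
  rw [Finset.sum_mul]
  refine Finset.sum_congr rfl fun j _ => ?_
  by_cases h : i = j
  · subst h; simp
  · rw [if_neg h, if_neg (Ne.symm h)]; ring

/-- for odd `n ≥ 3`, `0 ≤ ρ < 1`, degrees `≥ 1` and full-column-rank `F`,
the expectation of `xᵀK(ρ)x` over uniform near-balanced sign vectors equals `tr(K(ρ)·C)`,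
where `C` has unit diagonal and off-diagonal entries `-1/n`. -/
theorem expected_precision_odd {n p : ℕ} (hn : 3 ≤ n) (hodd : Odd n)
    (W : Matrix (Fin n) (Fin n) ℝ)
    (hWsymm : W.IsSymm) (hW01 : ∀ i j, W i j = 0 ∨ W i j = 1) (hWdiag : ∀ i, W i i = 0)
    (hdeg : ∀ i, 1 ≤ degVec W i)
    (F : Matrix (Fin n) (Fin (p + 1)) ℝ) (hF : F.rank = p + 1)
    (ρ : ℝ) (hρ0 : 0 ≤ ρ) (hρ1 : ρ < 1) :
    (∑ v ∈ nearBalancedVecs n, v ⬝ᵥ (Kmat W F ρ).mulVec v) /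
        ((nearBalancedVecs n).card : ℝ) =
      (Kmat W F ρ *
        Matrix.of fun i j => if i = j then (1 : ℝ) else -1 / (n : ℝ)).trace := by
  exact key_expectation hn hodd (Kmat W F ρ)
end
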